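/- arXiv:1502.01442 — 7 statements merged into one kernel-verified Lean document; each statement's English description precedes it below -/
import Mathlib

section
/- If G is a k-regular connected vertex-transitive finite simple graph, then the edge-connectivity of G equals k. -/
open SimpleGraph

variable {V : Type*}

/-- `G` has a perfect matching. -/
def HasPerfectMatching (G : SimpleGraph V) : Prop :=
  ∃ M : G.Subgraph, M.IsPerfectMatching

/-- `F` is a matching preclusion set of `G`. -/
def IsMPSet (G : SimpleGraph V) (F : Finset (Sym2 V)) : Prop :=
  ↑F ⊆ G.edgeSet ∧ ¬ HasPerfectMatching (G.deleteEdges ↑F)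

/-- The matching preclusion number of `G`. -/
noncomputable def mpNumber (G : SimpleGraph V) : ℕ :=
  sInf {n | ∃ F : Finset (Sym2 V), IsMPSet G F ∧ F.card = n}

/-- `G` is `k`-regular. -/
def GIsRegular (G : SimpleGraph V) (k : ℕ) : Prop :=
  ∀ v : V, (G.neighborSet v).ncard = k

/-- `G` is vertex-transitive. -/
def VertexTransitive (G : SimpleGraph V) : Prop :=
  ∀ x y : V, ∃ φ : G ≃g G, φ x = y

/-- The minimum degree of `G`. -/
noncomputable def minDeg (G : SimpleGraph V) : ℕ :=
  sInf {d | ∃ v : V, (G.neighborSet v).ncard = d}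

/-- The edge-connectivity of `G`. -/
noncomputable def edgeConnectivity (G : SimpleGraph V) : ℕ :=
  sInf {n | ∃ F : Finset (Sym2 V), ↑F ⊆ G.edgeSet ∧ F.card = n ∧
    ¬ (G.deleteEdges ↑F).Connected}

section MaderAux
variable [Fintype V]
open Finset
open scoped Classical in
noncomputable def cutP (G : SimpleGraph V) (A : Finset V) : Finset (V × V) :=
  univ.filter (fun p => G.Adj p.1 p.2 ∧ p.1 ∈ A ∧ p.2 ∉ A)

open scoped Classical

lemma cutP_compl (G : SimpleGraph V) (A : Finset V) : (cutP G Aᶜ).card = (cutP G A).card := by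
  apply Finset.card_bij (fun p _ => (p.2, p.1))
  · rintro ⟨u, v⟩ h
    simp only [cutP, mem_filter, mem_univ, true_and, Finset.mem_compl] at h ⊢
    exact ⟨h.1.symm, by simpa using h.2.2, h.2.1⟩
  · rintro ⟨u, v⟩ _ ⟨u', v'⟩ _ h
    simp only [Prod.mk.injEq] at h
    exact Prod.ext h.2 h.1
  · rintro ⟨u, v⟩ h
    refine ⟨(v, u), ?_, rfl⟩
    simp only [cutP, mem_filter, mem_univ, true_and, Finset.mem_compl] at h ⊢
    exact ⟨h.1.symm, by simpa using h.2.2, by simpa using h.2.1⟩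

lemma cutP_submod (G : SimpleGraph V) (A B : Finset V) :
    (cutP G (A ∩ B)).card + (cutP G (A ∪ B)).card ≤ (cutP G A).card + (cutP G B).card := by
  simp only [cutP, Finset.card_filter]
  rw [← Finset.sum_add_distrib, ← Finset.sum_add_distrib]
  apply Finset.sum_le_sum
  rintro ⟨u, v⟩ -
  by_cases hadj : G.Adj u v <;>
    by_cases h1 : u ∈ A <;> by_cases h2 : u ∈ B <;> by_cases h3 : v ∈ A <;> by_cases h4 : v ∈ B <;>
    simp [h1, h2, h3, h4, hadj]

lemma cutP_posimod (G : SimpleGraph V) (A B : Finset V) :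
    (cutP G (A \ B)).card + (cutP G (B \ A)).card ≤ (cutP G A).card + (cutP G B).card := by
  have h := cutP_submod G A Bᶜ
  rw [cutP_compl G B] at h
  have e1 : A ∩ Bᶜ = A \ B := by ext x; simp [Finset.mem_sdiff]
  have e2 : A ∪ Bᶜ = (B \ A)ᶜ := by ext x; simp [Finset.mem_sdiff]; tauto
  rw [e1, e2, cutP_compl G (B \ A)] at h
  exact h

lemma cutP_image (G : SimpleGraph V) (φ : G ≃g G) (A : Finset V) :
    (cutP G (A.image φ)).card = (cutP G A).card := by
  apply Finset.card_bij (fun p _ => (φ.symm p.1, φ.symm p.2))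
  · rintro ⟨u, v⟩ h
    simp only [cutP, mem_filter, mem_univ, true_and, Finset.mem_image] at h ⊢
    refine ⟨?_, ?_, ?_⟩
    · exact φ.symm.map_adj_iff.mpr h.1
    · obtain ⟨x, hx, hxe⟩ := h.2.1
      have : φ.symm u = x := by rw [← hxe]; simp
      rwa [this]
    · intro hc
      exact h.2.2 ⟨φ.symm v, hc, by simp⟩
  · rintro ⟨u, v⟩ _ ⟨u', v'⟩ _ h
    simp only [Prod.mk.injEq] at h
    exact Prod.ext (φ.symm.injective h.1) (φ.symm.injective h.2)
  · rintro ⟨u, v⟩ h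
    refine ⟨(φ u, φ v), ?_, by simp⟩
    simp only [cutP, mem_filter, mem_univ, true_and, Finset.mem_image] at h ⊢
    refine ⟨φ.map_adj_iff.mpr h.1, ⟨u, h.2.1, rfl⟩, ?_⟩
    rintro ⟨x, hx, hxe⟩
    exact h.2.2 (by rwa [← φ.injective hxe])

lemma cutP_singleton (G : SimpleGraph V) (v : V) :
    (cutP G {v}).card = (G.neighborSet v).ncard := by
  rw [Set.ncard_eq_toFinset_card', Set.toFinset_card, SimpleGraph.card_neighborSet_eq_degree,
    ← SimpleGraph.card_neighborFinset_eq_degree]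
  apply Finset.card_bij (fun p _ => p.2)
  · rintro ⟨u, w⟩ h
    simp only [cutP, mem_filter, mem_univ, true_and, Finset.mem_singleton] at h
    rw [SimpleGraph.mem_neighborFinset, h.2.1] at *
    exact h.1
  · rintro ⟨u, w⟩ hu ⟨u', w'⟩ hu' h
    simp only [cutP, mem_filter, Finset.mem_singleton] at hu hu'
    simp only at h
    exact Prod.ext (hu.2.2.1.trans hu'.2.2.1.symm) h
  · intro w hw
    rw [SimpleGraph.mem_neighborFinset] at hw
    exact ⟨(v, w), by simp [cutP, hw, hw.ne'], rfl⟩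

noncomputable def cutF (G : SimpleGraph V) (A : Finset V) : Finset (Sym2 V) :=
  (cutP G A).image (fun p => s(p.1, p.2))

lemma cutF_subset_edgeSet (G : SimpleGraph V) (A : Finset V) : ↑(cutF G A) ⊆ G.edgeSet := by
  intro e he
  simp only [cutF, Finset.coe_image, Set.mem_image, Finset.mem_coe] at he
  obtain ⟨⟨u, v⟩, hp, rfl⟩ := he
  simp only [cutP, mem_filter] at hp
  exact hp.2.1

lemma reach_stay (G : SimpleGraph V) (A : Finset V) {x y : V}
    (h : (G.deleteEdges ↑(cutF G A)).Reachable x y) (hx : x ∈ A) : y ∈ A := by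
  obtain ⟨w⟩ := h
  induction w with
  | nil => exact hx
  | @cons a b c hab p ih =>
    apply ih
    rw [SimpleGraph.deleteEdges_adj] at hab
    by_contra hb
    exact hab.2 (by
      simp only [Finset.mem_coe, cutF, Finset.mem_image]
      exact ⟨(a, b), by simp [cutP, hab.1, hx, hb], rfl⟩)

lemma cutF_disconnects (G : SimpleGraph V) (A : Finset V) (hA : A.Nonempty)
    (hAc : Aᶜ.Nonempty) : ¬ (G.deleteEdges ↑(cutF G A)).Connected := by
  intro hc
  obtain ⟨x, hx⟩ := hA
  obtain ⟨y, hy⟩ := hAc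
  rw [Finset.mem_compl] at hy
  exact hy (reach_stay G A (hc.preconnected x y) hx)

lemma cut_from_disconnected (G : SimpleGraph V) (hconn : G.Connected) (F : Finset (Sym2 V))
    (hdis : ¬ (G.deleteEdges ↑F).Connected) :
    ∃ A : Finset V, A.Nonempty ∧ Aᶜ.Nonempty ∧ (cutP G A).card ≤ F.card := by
  have hne : Nonempty V := hconn.nonempty
  obtain ⟨x⟩ := hne
  set G' := G.deleteEdges ↑F with hG'
  refine ⟨univ.filter (fun y => G'.Reachable x y),
    ⟨x, Finset.mem_filter.mpr ⟨Finset.mem_univ x, SimpleGraph.Reachable.refl x⟩⟩, ?_, ?_⟩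
  · by_contra h
    rw [Finset.not_nonempty_iff_eq_empty, Finset.compl_eq_empty_iff] at h
    apply hdis
    have : Nonempty V := ⟨x⟩
    refine ⟨fun a b => ?_⟩
    have key : ∀ c : V, G'.Reachable x c := by
      intro c
      have hc := Finset.mem_univ c
      rw [← h, mem_filter] at hc
      exact hc.2
    exact (key a).symm.trans (key b)
  · apply Finset.card_le_card_of_injOn (fun p => s(p.1, p.2))
    · rintro ⟨u, v⟩ hp
      change (u, v) ∈ cutP G (univ.filter (fun y => G'.Reachable x y)) at hp
      simp only [cutP, mem_filter, mem_univ, true_and] at hp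
      by_contra hF
      apply hp.2.2
      have hru : G'.Reachable x u := hp.2.1
      exact hru.trans ⟨SimpleGraph.Walk.cons (by rw [hG', SimpleGraph.deleteEdges_adj]; exact ⟨hp.1, hF⟩) SimpleGraph.Walk.nil⟩
    · rintro ⟨u, v⟩ hu ⟨u', v'⟩ hu' h
      simp only [Finset.mem_coe, cutP, mem_filter] at hu hu'
      rw [Sym2.eq_iff] at h
      rcases h with ⟨rfl, rfl⟩ | ⟨rfl, rfl⟩
      · rfl
      · exact absurd hu'.2.2.1 hu.2.2.2

lemma cutP_nonempty (G : SimpleGraph V) (hconn : G.Connected) (A : Finset V)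
    (hA : A.Nonempty) (hAc : Aᶜ.Nonempty) : (cutP G A).Nonempty := by
  obtain ⟨x, hx⟩ := hA
  obtain ⟨y, hy⟩ := hAc
  rw [Finset.mem_compl] at hy
  obtain ⟨w⟩ := hconn.preconnected x y
  clear hconn
  induction w with
  | nil => exact absurd hx hy
  | @cons a b c hab p ih =>
    by_cases hb : b ∈ A
    · exact ih hb hy
    · exact ⟨(a, b), by simp [cutP, hab, hx, hb]⟩

noncomputable def outdeg (G : SimpleGraph V) (A : Finset V) (v : V) : ℕ :=
  (univ.filter (fun w => G.Adj v w ∧ w ∉ A)).card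

lemma cutP_card_sum (G : SimpleGraph V) (A : Finset V) :
    (cutP G A).card = ∑ v ∈ A, outdeg G A v := by
  rw [cutP, Finset.card_filter, ← Finset.univ_product_univ, Finset.sum_product]
  have step : ∀ u ∈ univ, (∑ v : V, if G.Adj u v ∧ u ∈ A ∧ v ∉ A then 1 else 0) =
      if u ∈ A then outdeg G A u else 0 := by
    intro u _
    by_cases hu : u ∈ A
    · simp only [hu, if_true, outdeg, Finset.card_filter]
      exact Finset.sum_congr rfl (fun v _ => by simp [hu])
    · simp [hu]
  rw [Finset.sum_congr rfl step, Finset.sum_ite_mem, Finset.univ_inter]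

lemma outdeg_ge (G : SimpleGraph V) (k : ℕ) (hdeg : ∀ v, G.degree v = k) (A : Finset V)
    (v : V) (hv : v ∈ A) : k ≤ outdeg G A v + (A.card - 1) := by
  have hsplit : G.degree v = (univ.filter (fun w => G.Adj v w ∧ w ∈ A)).card + outdeg G A v := by
    rw [← SimpleGraph.card_neighborFinset_eq_degree, outdeg, ← Finset.card_union_of_disjoint]
    · congr 1
      ext w
      simp only [SimpleGraph.mem_neighborFinset, Finset.mem_union, mem_filter, mem_univ, true_and]
      tauto
    · rw [Finset.disjoint_filter]
      tauto
  have hin : (univ.filter (fun w => G.Adj v w ∧ w ∈ A)).card ≤ A.card - 1 := by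
    have hsub : univ.filter (fun w => G.Adj v w ∧ w ∈ A) ⊆ A.erase v := by
      intro w hw
      simp only [mem_filter] at hw
      exact Finset.mem_erase.mpr ⟨fun h => (h ▸ hw.2.1).ne rfl, hw.2.2⟩
    calc _ ≤ (A.erase v).card := Finset.card_le_card hsub
    _ = A.card - 1 := Finset.card_erase_of_mem hv
  rw [hdeg v] at hsplit
  omega

lemma mader (G : SimpleGraph V) (k : ℕ) (hdeg : ∀ v, G.degree v = k)
    (hconn : G.Connected) (hvt : ∀ x y : V, ∃ φ : G ≃g G, φ x = y)
    (A0 : Finset V) (h0 : A0.Nonempty) (h0c : A0ᶜ.Nonempty)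
    (hlt : (cutP G A0).card < k) : False := by
  classical
  set S : Set ℕ := {n | ∃ A : Finset V, A.Nonempty ∧ Aᶜ.Nonempty ∧ (cutP G A).card = n} with hS
  have hSne : S.Nonempty := ⟨(cutP G A0).card, A0, h0, h0c, rfl⟩
  set μ := sInf S with hμ
  have hμle : ∀ A : Finset V, A.Nonempty → Aᶜ.Nonempty → μ ≤ (cutP G A).card :=
    fun A h1 h2 => Nat.sInf_le ⟨A, h1, h2, rfl⟩
  have hμk : μ < k := lt_of_le_of_lt (hμle A0 h0 h0c) hlt
  -- Frag
  set Frag : Finset V → Prop := fun A => A.Nonempty ∧ Aᶜ.Nonempty ∧ (cutP G A).card = μ with hFrag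
  obtain ⟨B0, hB0⟩ : ∃ B, Frag B := by
    obtain ⟨B, h1, h2, h3⟩ := Nat.sInf_mem hSne
    exact ⟨B, h1, h2, h3⟩
  -- μ ≥ 1
  have hμpos : 1 ≤ μ := by
    rw [← hB0.2.2]
    exact Finset.card_pos.mpr (cutP_nonempty G hconn B0 hB0.1 hB0.2.1)
  -- atom
  set T : Set ℕ := {n | ∃ A : Finset V, Frag A ∧ A.card = n} with hT
  have hTne : T.Nonempty := ⟨B0.card, B0, hB0, rfl⟩
  set a := sInf T with ha
  obtain ⟨A, hAfrag, hAcard⟩ : ∃ A : Finset V, Frag A ∧ A.card = a := Nat.sInf_mem hTne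
  have hale : ∀ B : Finset V, Frag B → a ≤ B.card := fun B hB => Nat.sInf_le ⟨B, hB, rfl⟩
  -- a ≥ 2
  have ha2 : 2 ≤ a := by
    by_contra h
    interval_cases a
    · exact absurd (Finset.card_pos.mpr hAfrag.1) (by omega)
    · obtain ⟨v, hv⟩ := Finset.card_eq_one.mp hAcard
      have := hAfrag.2.2
      rw [hv, cutP_singleton] at this
      have hd : (G.neighborSet v).ncard = k := by
        rw [Set.ncard_eq_toFinset_card', Set.toFinset_card,
          SimpleGraph.card_neighborSet_eq_degree, hdeg]
      omega
  -- a > μ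
  have haμ : μ < a := by
    by_contra h
    push_neg at h  -- a ≤ μ
    have hsum : μ = ∑ v ∈ A, outdeg G A v := by rw [← hAfrag.2.2, cutP_card_sum]
    have hbound : ∀ v ∈ A, k + 1 - a ≤ outdeg G A v := by
      intro v hv
      have := outdeg_ge G k hdeg A v hv
      rw [hAcard] at this
      omega
    have : A.card * (k + 1 - a) ≤ ∑ v ∈ A, outdeg G A v := by
      calc A.card * (k + 1 - a) = ∑ _v ∈ A, (k + 1 - a) := by
            rw [Finset.sum_const, smul_eq_mul]
      _ ≤ _ := Finset.sum_le_sum hbound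
    rw [← hsum, hAcard] at this
    -- a * (k + 1 - a) ≤ μ, with 2 ≤ a ≤ μ < k : contradiction
    have hka : a ≤ k - 1 := by omega
    have : a * (k + 1 - a) ≥ k := by
      have h1 : (1:ℕ) ≤ a := by omega
      have h2 : a ≤ k := by omega
      nlinarith [Nat.sub_add_cancel (show a ≤ k + 1 by omega),
        Nat.mul_le_mul_left a (show 2 ≤ k + 1 - a by omega)]
    omega
  -- atom subset lemma
  have atom_sub : ∀ A' B : Finset V, Frag A' → A'.card = a → Frag B →
      (A' ∩ B).Nonempty → A' ⊆ B := by
    intro A' B hA' hcard hB hint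
    by_cases hU : A' ∪ B = Finset.univ
    · -- use posimodularity
      by_contra hns
      have hAB : (A' \ B).Nonempty := by
        rw [Finset.sdiff_nonempty]; exact hns
      have hBA : (B \ A').Nonempty := by
        obtain ⟨x, hx⟩ := hA'.2.1
        rw [Finset.mem_compl] at hx
        have : x ∈ A' ∪ B := hU ▸ Finset.mem_univ x
        rw [Finset.mem_union] at this
        exact ⟨x, Finset.mem_sdiff.mpr ⟨this.resolve_left hx, hx⟩⟩
      have hABc : (A' \ B)ᶜ.Nonempty := by
        obtain ⟨x, hx⟩ := hint
        rw [Finset.mem_inter] at hx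
        exact ⟨x, Finset.mem_compl.mpr (by simp [Finset.mem_sdiff, hx.2])⟩
      have hBAc : (B \ A')ᶜ.Nonempty := by
        obtain ⟨x, hx⟩ := hA'.1
        exact ⟨x, Finset.mem_compl.mpr (by simp [Finset.mem_sdiff, hx])⟩
      have hp := cutP_posimod G A' B
      rw [hA'.2.2, hB.2.2] at hp
      have h1 := hμle _ hAB hABc
      have h2 := hμle _ hBA hBAc
      have hfragAB : Frag (A' \ B) := ⟨hAB, hABc, by omega⟩
      have := hale _ hfragAB
      have hlt' : (A' \ B).card < A'.card := by
        apply Finset.card_lt_card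
        rw [Finset.ssubset_iff_of_subset (Finset.sdiff_subset)]
        obtain ⟨x, hx⟩ := hint
        rw [Finset.mem_inter] at hx
        exact ⟨x, hx.1, by simp [Finset.mem_sdiff, hx.2]⟩
      omega
    · -- use submodularity
      have hintc : (A' ∩ B)ᶜ.Nonempty := by
        obtain ⟨x, hx⟩ := hA'.2.1
        rw [Finset.mem_compl] at hx
        exact ⟨x, Finset.mem_compl.mpr (by simp [Finset.mem_inter]; tauto)⟩
      have hUne : (A' ∪ B).Nonempty := hA'.1.mono Finset.subset_union_left
      have hUc : (A' ∪ B)ᶜ.Nonempty := by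
        rw [Finset.nonempty_iff_ne_empty]
        intro h
        exact hU ((Finset.compl_eq_empty_iff _).mp h)
      have hp := cutP_submod G A' B
      rw [hA'.2.2, hB.2.2] at hp
      have h1 := hμle _ hint hintc
      have h2 := hμle _ hUne hUc
      have hfragI : Frag (A' ∩ B) := ⟨hint, hintc, by omega⟩
      have hge := hale _ hfragI
      have hsub : A' ∩ B ⊆ A' := Finset.inter_subset_left
      have : A' ∩ B = A' := Finset.eq_of_subset_of_card_le hsub (by omega)
      rw [← this]
      exact Finset.inter_subset_right
  -- images of the atom are atoms
  have himg : ∀ φ : G ≃g G, Frag (A.image φ) ∧ (A.image φ).card = a := by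
    intro φ
    have hcard : (A.image φ).card = a := by
      rw [Finset.card_image_of_injective _ φ.injective, hAcard]
    have hcomp : (A.image φ)ᶜ.Nonempty := by
      obtain ⟨x, hx⟩ := hAfrag.2.1
      rw [Finset.mem_compl] at hx
      refine ⟨φ x, Finset.mem_compl.mpr ?_⟩
      rw [Finset.mem_image]
      rintro ⟨y, hy, hyx⟩
      exact hx (φ.injective hyx ▸ hy)
    exact ⟨⟨hAfrag.1.image φ, hcomp, by rw [cutP_image, hAfrag.2.2]⟩, hcard⟩
  -- find u with cross edge, w with none
  obtain ⟨⟨u, v⟩, huv⟩ := cutP_nonempty G hconn A hAfrag.1 hAfrag.2.1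
  simp only [cutP, mem_filter, mem_univ, true_and] at huv
  obtain ⟨w, hw, hwdeg⟩ : ∃ w ∈ A, outdeg G A w = 0 := by
    by_contra h
    push_neg at h
    have : A.card ≤ ∑ v ∈ A, outdeg G A v := by
      calc A.card = ∑ _v ∈ A, 1 := by rw [Finset.sum_const, smul_eq_mul, mul_one]
      _ ≤ _ := Finset.sum_le_sum (fun v hv => by have := h v hv; omega)
    rw [← cutP_card_sum, hAfrag.2.2, hAcard] at this
    omega
  obtain ⟨φ, hφ⟩ := hvt w u
  have himgA := himg φ
  have heq : A.image φ = A := by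
    have h1 : A.image φ ⊆ A := atom_sub _ _ himgA.1 himgA.2 hAfrag
      ⟨u, Finset.mem_inter.mpr ⟨Finset.mem_image.mpr ⟨w, hw, hφ⟩, huv.2.1⟩⟩
    exact Finset.eq_of_subset_of_card_le h1 (by rw [himgA.2, hAcard])
  -- w has all neighbors in A, so u = φ w has all neighbors in A.image φ = A
  have hvin : v ∈ A := by
    have hadj : G.Adj w (φ.symm v) := by
      have : G.Adj (φ w) v := hφ ▸ huv.1
      have h2 : G.Adj (φ w) (φ (φ.symm v)) := by simpa using this
      exact φ.map_adj_iff.mp h2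
    have hmem : φ.symm v ∈ A := by
      by_contra hc
      have : (univ.filter (fun x => G.Adj w x ∧ x ∉ A)).Nonempty :=
        ⟨φ.symm v, by simp [hadj, hc]⟩
      rw [← Finset.card_pos] at this
      rw [outdeg] at hwdeg
      omega
    have : φ (φ.symm v) ∈ A.image φ := Finset.mem_image.mpr ⟨_, hmem, rfl⟩
    rwa [heq, RelIso.apply_symm_apply] at this
  exact huv.2.2 hvin

end MaderAux

theorem stmt1 [Fintype V] (G : SimpleGraph V) (k : ℕ)
    (hreg : GIsRegular G k) (hconn : G.Connected)
    (hvt : VertexTransitive G) :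
    edgeConnectivity G = k := by
  classical
  have hdeg : ∀ v, G.degree v = k := by
    intro v
    rw [← hreg v, Set.ncard_eq_toFinset_card', Set.toFinset_card,
      SimpleGraph.card_neighborSet_eq_degree]
  rcases subsingleton_or_nontrivial V with hsub | hnt
  · have hne : Nonempty V := hconn.nonempty
    obtain ⟨v⟩ := hne
    have hk : k = 0 := by
      rw [← hreg v]
      have : G.neighborSet v = ∅ := by
        ext w
        simp only [SimpleGraph.mem_neighborSet, Set.mem_empty_iff_false, iff_false]
        intro h
        exact h.ne (Subsingleton.elim v w)
      rw [this, Set.ncard_empty]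
    have hempty : {n | ∃ F : Finset (Sym2 V), ↑F ⊆ G.edgeSet ∧ F.card = n ∧
        ¬ (G.deleteEdges ↑F).Connected} = ∅ := by
      ext n
      simp only [Set.mem_setOf_eq, Set.mem_empty_iff_false, iff_false, not_exists]
      rintro F ⟨_, _, hd⟩
      have : Nonempty V := ⟨v⟩
      exact hd ⟨fun a b => by rw [Subsingleton.elim a b]⟩
    rw [edgeConnectivity, hempty, Nat.sInf_empty, hk]
  · obtain ⟨v, w, hvw⟩ := exists_pair_ne V
    have hvne : ({v} : Finset V).Nonempty := ⟨v, Finset.mem_singleton_self v⟩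
    have hvc : ({v} : Finset V)ᶜ.Nonempty :=
      ⟨w, Finset.mem_compl.mpr (by simp [hvw.symm])⟩
    have hdisc := cutF_disconnects G {v} hvne hvc
    have hmem : (cutF G {v}).card ∈ {n | ∃ F : Finset (Sym2 V), ↑F ⊆ G.edgeSet ∧ F.card = n ∧
        ¬ (G.deleteEdges ↑F).Connected} := ⟨cutF G {v}, cutF_subset_edgeSet G {v}, rfl, hdisc⟩
    have hupper : edgeConnectivity G ≤ k := by
      calc edgeConnectivity G ≤ (cutF G {v}).card := Nat.sInf_le hmem
      _ ≤ (cutP G {v}).card := Finset.card_image_le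
      _ = k := by rw [cutP_singleton]; exact hreg v
    have hlower : k ≤ edgeConnectivity G := by
      by_contra h
      push_neg at h
      obtain ⟨F, hFsub, hFcard, hFdis⟩ := Nat.sInf_mem (Set.nonempty_of_mem hmem)
      obtain ⟨A, h1, h2, h3⟩ := cut_from_disconnected G hconn F hFdis
      exact mader G k hdeg hconn hvt A h1 h2 (by rw [edgeConnectivity] at h; omega)
    omega
end

section
/- Let G be a non-bipartite connected vertex-transitive finite simple graph of even order, not isomorphic to K₄ or K₆, and let C be an odd cycle in G of minimum odd length with |C| ≥ |G|/2. Then every vertex of G not on C is adjacent to at most two vertices of C. -/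
open SimpleGraph

variable {V : Type*}

/-- The odd girth of `G`: the minimum length of an odd cycle. -/
noncomputable def oddGirth (G : SimpleGraph V) : ℕ :=
  sInf {n | Odd n ∧ ∃ (u : V) (c : G.Walk u u), c.IsCycle ∧ c.length = n}

lemma eq_of_length_eq_zero {G : SimpleGraph V} {a b : V} {p : G.Walk a b}
    (h : p.length = 0) : a = b := by
  cases p with
  | nil => rfl
  | cons h' q => simp [Walk.length_cons] at h

lemma adj_of_length_eq_one {G : SimpleGraph V} {a b : V} {p : G.Walk a b}
    (h : p.length = 1) : G.Adj a b := by
  have h1 := p.adj_getVert_succ (i := 0) (by omega)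
  have h2 := p.getVert_length
  rw [h] at h2
  rwa [p.getVert_zero, h2] at h1

/-- From an odd path between two neighbors of `v` avoiding `v`, build an odd cycle. -/
lemma oddGirth_le_of_odd_path {G : SimpleGraph V} {v α β : V} (s : G.Walk α β)
    (hs : s.IsPath) (hv : v ∉ s.support) (hvα : G.Adj v α) (hvβ : G.Adj v β)
    (hodd : Odd s.length) : oddGirth G ≤ s.length + 2 := by
  have hq : (Walk.cons hvα s).IsPath := hs.cons hv
  have hcyc : (Walk.cons hvβ.symm (Walk.cons hvα s)).IsCycle := by
    rw [Walk.cons_isCycle_iff]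
    refine ⟨hq, ?_⟩
    simp only [Walk.edges_cons, List.mem_cons]
    rintro (he | he)
    · rw [Sym2.eq, Sym2.rel_iff'] at he
      rcases he with ⟨rfl, rfl⟩ | ⟨rfl, rfl⟩
      · exact hv s.end_mem_support
      · -- β = α : contradicts odd length (length would be 0 for a path α to α)
        have : s.length = 0 := by
          have := hs.support_nodup
          cases s with
          | nil => rfl
          | cons h' q =>
            exfalso
            simp only [Walk.support_cons, List.nodup_cons] at this
            exact this.1 q.end_mem_support
        rw [this] at hodd
        simp at hodd
    · exact hv (s.snd_mem_support_of_mem_edges he)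
  have hlen : (Walk.cons hvβ.symm (Walk.cons hvα s)).length = s.length + 2 := by
    simp [Walk.length_cons]
  refine Nat.sInf_le ⟨?_, β, _, hcyc, hlen⟩
  obtain ⟨k, hk⟩ := hodd
  exact ⟨k + 1, by omega⟩

/-- Three paths chained in a triangle between neighbors of `v`, with lengths summing
to the odd girth, force the odd girth to be at most 3, and then all have length 1. -/
lemma core_lemma {G : SimpleGraph V} {v p q r : V}
    (hpq : p ≠ q) (hqr : q ≠ r) (hrp : r ≠ p)
    (s1 : G.Walk p q) (s2 : G.Walk q r) (s3 : G.Walk r p)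
    (h1 : s1.IsPath) (h2 : s2.IsPath) (h3 : s3.IsPath)
    (hv1 : v ∉ s1.support) (hv2 : v ∉ s2.support) (hv3 : v ∉ s3.support)
    (hvp : G.Adj v p) (hvq : G.Adj v q) (hvr : G.Adj v r)
    (hsum : s1.length + s2.length + s3.length = oddGirth G)
    (hodd : Odd (oddGirth G)) :
    s1.length = 1 ∧ s2.length = 1 ∧ s3.length = 1 := by
  have hx1 : 1 ≤ s1.length := by
    rcases Nat.eq_zero_or_pos s1.length with h | h
    · exact absurd (eq_of_length_eq_zero h) hpq
    · exact h
  have hx2 : 1 ≤ s2.length := by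
    rcases Nat.eq_zero_or_pos s2.length with h | h
    · exact absurd (eq_of_length_eq_zero h) hqr
    · exact h
  have hx3 : 1 ≤ s3.length := by
    rcases Nat.eq_zero_or_pos s3.length with h | h
    · exact absurd (eq_of_length_eq_zero h) hrp
    · exact h
  have d1 : s1.length % 2 = 0 ∨ (s1.length % 2 = 1 ∧ oddGirth G ≤ s1.length + 2) := by
    rcases Nat.even_or_odd s1.length with h | h
    · exact Or.inl (Nat.even_iff.mp h)
    · exact Or.inr ⟨Nat.odd_iff.mp h, oddGirth_le_of_odd_path s1 h1 hv1 hvp hvq h⟩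
  have d2 : s2.length % 2 = 0 ∨ (s2.length % 2 = 1 ∧ oddGirth G ≤ s2.length + 2) := by
    rcases Nat.even_or_odd s2.length with h | h
    · exact Or.inl (Nat.even_iff.mp h)
    · exact Or.inr ⟨Nat.odd_iff.mp h, oddGirth_le_of_odd_path s2 h2 hv2 hvq hvr h⟩
  have d3 : s3.length % 2 = 0 ∨ (s3.length % 2 = 1 ∧ oddGirth G ≤ s3.length + 2) := by
    rcases Nat.even_or_odd s3.length with h | h
    · exact Or.inl (Nat.even_iff.mp h)
    · exact Or.inr ⟨Nat.odd_iff.mp h, oddGirth_le_of_odd_path s3 h3 hv3 hvr hvp h⟩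
  have hg : oddGirth G % 2 = 1 := Nat.odd_iff.mp hodd
  omega

/-- Split a cycle through `a` at two other support vertices `b`, `c` into three
path segments (in one of the two possible orders). -/
lemma cycle_split {G : SimpleGraph V} {a b c v : V} (W : G.Walk a a) (hW : W.IsCycle)
    (hb : b ∈ W.support) (hc : c ∈ W.support)
    (hba : b ≠ a) (hca : c ≠ a) (hbc : b ≠ c) (hv : v ∉ W.support) :
    (∃ (s1 : G.Walk a b) (s2 : G.Walk b c) (s3 : G.Walk c a),
      s1.IsPath ∧ s2.IsPath ∧ s3.IsPath ∧
      v ∉ s1.support ∧ v ∉ s2.support ∧ v ∉ s3.support ∧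
      s1.length + s2.length + s3.length = W.length) ∨
    (∃ (s1 : G.Walk a c) (s2 : G.Walk c b) (s3 : G.Walk b a),
      s1.IsPath ∧ s2.IsPath ∧ s3.IsPath ∧
      v ∉ s1.support ∧ v ∉ s2.support ∧ v ∉ s3.support ∧
      s1.length + s2.length + s3.length = W.length) := by
  classical
  cases W with
  | nil => exact absurd rfl hW.ne_nil
  | cons h rest =>
    rw [Walk.cons_isCycle_iff] at hW
    obtain ⟨hrest, -⟩ := hW
    simp only [Walk.support_cons, List.mem_cons] at hb hc hv
    push_neg at hv
    obtain ⟨hva, hvrest⟩ := hv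
    replace hb : b ∈ rest.support := hb.resolve_left hba
    replace hc : c ∈ rest.support := hc.resolve_left hca
    -- a is not in the interior: a ∉ (rest.takeUntil x).support for x ≠ a
    have key : ∀ (x : V) (hx : x ∈ rest.support), x ≠ a →
        a ∉ (rest.takeUntil x hx).support := by
      intro x hx hxa hmem
      have hsp : rest.support = (rest.takeUntil x hx).support
          ++ (rest.dropUntil x hx).support.tail := by
        conv_lhs => rw [← rest.take_spec hx]
        exact Walk.support_append _ _
      have hnd := hrest.support_nodup
      rw [hsp] at hnd
      rw [List.nodup_append] at hnd
      have h2 : a ∈ (rest.dropUntil x hx).support.tail := by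
        have h3 := (rest.dropUntil x hx).end_mem_support
        rw [(rest.dropUntil x hx).support_eq_cons, List.mem_cons] at h3
        exact h3.resolve_left (fun h4 => hxa h4.symm)
      exact hnd.2.2 a hmem a h2 rfl
    have hlen_rest : ∀ (x : V) (hx : x ∈ rest.support),
        (rest.takeUntil x hx).length + (rest.dropUntil x hx).length = rest.length := by
      intro x hx
      conv_rhs => rw [← rest.take_spec hx]
      exact (Walk.length_append _ _).symm
    by_cases hcd : c ∈ (rest.dropUntil b hb).support
    · -- order a, b, c
      left
      have hd1 : (rest.dropUntil b hb).IsPath := hrest.dropUntil hb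
      refine ⟨Walk.cons h (rest.takeUntil b hb),
        (rest.dropUntil b hb).takeUntil c hcd, (rest.dropUntil b hb).dropUntil c hcd,
        (hrest.takeUntil hb).cons (key b hb hba), hd1.takeUntil hcd, hd1.dropUntil hcd,
        ?_, ?_, ?_, ?_⟩
      · simp only [Walk.support_cons, List.mem_cons]
        push_neg
        exact ⟨hva, fun hm => hvrest (rest.support_takeUntil_subset hb hm)⟩
      · exact fun hm => hvrest (rest.support_dropUntil_subset hb
          ((rest.dropUntil b hb).support_takeUntil_subset hcd hm))
      · exact fun hm => hvrest (rest.support_dropUntil_subset hb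
          ((rest.dropUntil b hb).support_dropUntil_subset hcd hm))
      · have e1 := hlen_rest b hb
        have e2 : ((rest.dropUntil b hb).takeUntil c hcd).length
            + ((rest.dropUntil b hb).dropUntil c hcd).length
            = (rest.dropUntil b hb).length := by
          conv_rhs => rw [← (rest.dropUntil b hb).take_spec hcd]
          exact (Walk.length_append _ _).symm
        simp only [Walk.length_cons]
        omega
    · -- order a, c, b
      right
      have hct : c ∈ (rest.takeUntil b hb).support := by
        have := hc
        rw [← rest.take_spec hb, Walk.mem_support_append_iff] at this
        exact this.resolve_right hcd
      have ht1 : (rest.takeUntil b hb).IsPath := hrest.takeUntil hb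
      refine ⟨Walk.cons h ((rest.takeUntil b hb).takeUntil c hct),
        (rest.takeUntil b hb).dropUntil c hct, rest.dropUntil b hb,
        (ht1.takeUntil hct).cons (fun hm => key b hb hba
          ((rest.takeUntil b hb).support_takeUntil_subset hct hm)),
        ht1.dropUntil hct, hrest.dropUntil hb,
        ?_, ?_, ?_, ?_⟩
      · simp only [Walk.support_cons, List.mem_cons]
        push_neg
        exact ⟨hva, fun hm => hvrest (rest.support_takeUntil_subset hb
          ((rest.takeUntil b hb).support_takeUntil_subset hct hm))⟩
      · exact fun hm => hvrest (rest.support_takeUntil_subset hb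
          ((rest.takeUntil b hb).support_dropUntil_subset hct hm))
      · exact fun hm => hvrest (rest.support_dropUntil_subset hb hm)
      · have e1 := hlen_rest b hb
        have e2 : ((rest.takeUntil b hb).takeUntil c hct).length
            + ((rest.takeUntil b hb).dropUntil c hct).length
            = (rest.takeUntil b hb).length := by
          conv_rhs => rw [← (rest.takeUntil b hb).take_spec hct]
          exact (Walk.length_append _ _).symm
        simp only [Walk.length_cons]
        omega

lemma mem_support_rotate [DecidableEq V] {G : SimpleGraph V} {u a x : V} (c : G.Walk u u)
    (h : a ∈ c.support) : x ∈ (c.rotate a h).support ↔ x ∈ c.support := by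
  rw [Walk.rotate, Walk.mem_support_append_iff]
  conv_rhs => rw [← c.take_spec h]
  rw [Walk.mem_support_append_iff]
  tauto

lemma length_rotate' [DecidableEq V] {G : SimpleGraph V} {u a : V} (c : G.Walk u u)
    (h : a ∈ c.support) : (c.rotate a h).length = c.length := by
  rw [Walk.rotate, Walk.length_append]
  conv_rhs => rw [← c.take_spec h]
  rw [Walk.length_append]
  omega

lemma ncard_neighborSet_eq {G : SimpleGraph V} (hvt : VertexTransitive G) (x y : V) :
    (G.neighborSet x).ncard = (G.neighborSet y).ncard := by
  obtain ⟨φ, hφ⟩ := hvt x y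
  have e : G.neighborSet x ≃ G.neighborSet y := hφ ▸ φ.mapNeighborSet x
  rw [← Nat.card_coe_set_eq, ← Nat.card_coe_set_eq]
  exact Nat.card_congr e

lemma card_ne_lemma [Fintype V] {G : SimpleGraph V} (n : ℕ)
    (hK : IsEmpty (G ≃g (⊤ : SimpleGraph (Fin n))))
    (hcard : Fintype.card V = n)
    (hall : ∀ z w : V, z ≠ w → G.Adj z w) : False := by
  have hG : G = ⊤ := by
    ext z w
    simp only [top_adj]
    exact ⟨G.ne_of_adj, hall z w⟩
  have e : V ≃ Fin n := Fintype.equivFinOfCardEq (by simp [hcard])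
  exact hK.false (hG ▸ (completeGraph_eq_top V ▸ completeGraph_eq_top (Fin n) ▸
    Iso.completeGraph e))

lemma no_K4_config [Fintype V] {G : SimpleGraph V} (hvt : VertexTransitive G)
    (hK4 : IsEmpty (G ≃g (⊤ : SimpleGraph (Fin 4))))
    (hK6 : IsEmpty (G ≃g (⊤ : SimpleGraph (Fin 6))))
    {v a b c : V}
    (hva : G.Adj v a) (hvb : G.Adj v b) (hvc : G.Adj v c)
    (hab : G.Adj a b) (hbc : G.Adj b c) (hac : G.Adj a c)
    (hcard : Fintype.card V ≤ 6) (heven : Even (Fintype.card V)) : False := by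
  classical
  have hav := hva.symm; have hbv := hvb.symm; have hcv := hvc.symm
  have hba := hab.symm; have hcb := hbc.symm; have hca := hac.symm
  have hKcard : ({v, a, b, c} : Set V).ncard = 4 := by
    rw [Set.ncard_insert_of_notMem (by simp [hva.ne, hvb.ne, hvc.ne]),
      Set.ncard_insert_of_notMem (by simp [hab.ne, hac.ne]),
      Set.ncard_pair hbc.ne]
  have hcard4 : 4 ≤ Fintype.card V := by
    have := Set.ncard_le_ncard (Set.subset_univ ({v, a, b, c} : Set V)) Set.finite_univ
    rwa [Set.ncard_univ, Nat.card_eq_fintype_card, hKcard] at this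
  have hEvenMod : Fintype.card V % 2 = 0 := Nat.even_iff.mp heven
  -- the degree is the same everywhere
  have hreg := ncard_neighborSet_eq hvt
  rcases (by omega : Fintype.card V = 4 ∨ Fintype.card V = 6) with h4 | h6
  · -- card = 4 : G must be K4
    have hKuniv : ({v, a, b, c} : Set V) = Set.univ :=
      Set.eq_of_subset_of_ncard_le (Set.subset_univ _)
        (by rw [Set.ncard_univ, Nat.card_eq_fintype_card, h4, hKcard]) Set.finite_univ
    refine card_ne_lemma 4 hK4 h4 (fun z w hzw => ?_)
    have hz : z ∈ ({v, a, b, c} : Set V) := hKuniv ▸ Set.mem_univ z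
    have hw : w ∈ ({v, a, b, c} : Set V) := hKuniv ▸ Set.mem_univ w
    simp only [Set.mem_insert_iff, Set.mem_singleton_iff] at hz hw
    rcases hz with rfl | rfl | rfl | rfl <;> rcases hw with rfl | rfl | rfl | rfl <;>
      first | exact absurd rfl hzw | assumption
  · -- card = 6
    have hT : (Set.univ \ ({v, a, b, c} : Set V)).ncard = 2 := by
      rw [Set.ncard_diff (Set.subset_univ _) (Set.toFinite _),
        Set.ncard_univ, Nat.card_eq_fintype_card, h6, hKcard]
    obtain ⟨x, y, hxy, hXY⟩ := Set.ncard_eq_two.mp hT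
    have hxK : x ∉ ({v, a, b, c} : Set V) := by
      have : x ∈ Set.univ \ ({v, a, b, c} : Set V) := by rw [hXY]; simp
      exact this.2
    have hyK : y ∉ ({v, a, b, c} : Set V) := by
      have : y ∈ Set.univ \ ({v, a, b, c} : Set V) := by rw [hXY]; simp
      exact this.2
    have huniv : ∀ z : V, z ∈ ({v, a, b, c} : Set V) ∨ z = x ∨ z = y := by
      intro z
      by_cases hz : z ∈ ({v, a, b, c} : Set V)
      · exact Or.inl hz
      · right
        have : z ∈ Set.univ \ ({v, a, b, c} : Set V) := ⟨Set.mem_univ z, hz⟩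
        rw [hXY] at this
        simpa using this
    set d := (G.neighborSet v).ncard with hd
    have habc3 : ({a, b, c} : Set V).ncard = 3 := by
      rw [Set.ncard_insert_of_notMem (by simp [hab.ne, hac.ne]), Set.ncard_pair hbc.ne]
    have hd3 : 3 ≤ d := by
      rw [← habc3]
      exact Set.ncard_le_ncard (by
        intro z hz
        simp only [Set.mem_insert_iff, Set.mem_singleton_iff] at hz
        rcases hz with rfl | rfl | rfl <;> assumption) (Set.toFinite _)
    have hNsub : ∀ z : V, G.neighborSet z ⊆ Set.univ \ {z} := by
      intro z w hw
      exact ⟨Set.mem_univ w, by simpa using (G.ne_of_adj hw).symm⟩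
    have hcompl5 : ∀ z : V, (Set.univ \ ({z} : Set V)).ncard = 5 := by
      intro z
      rw [Set.ncard_diff (Set.subset_univ _) (Set.toFinite _),
        Set.ncard_univ, Nat.card_eq_fintype_card, h6, Set.ncard_singleton]
    have hd5 : d ≤ 5 := by
      rw [hd, ← hcompl5 v]
      exact Set.ncard_le_ncard (hNsub v) (Set.toFinite _)
    rcases (by omega : d = 3 ∨ d = 4 ∨ d = 5) with hdv | hdv | hdv
    · -- degree 3 : the K4 is a component, contradicting card 6
      have hNeq : ∀ z p q r : V, G.Adj z p → G.Adj z q → G.Adj z r →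
          p ≠ q → p ≠ r → q ≠ r → G.neighborSet z = {p, q, r} := by
        intro z p q r h1 h2 h3 n1 n2 n3
        refine (Set.eq_of_subset_of_ncard_le (by
          intro w hw
          simp only [Set.mem_insert_iff, Set.mem_singleton_iff] at hw
          rcases hw with rfl | rfl | rfl <;> assumption) ?_ (Set.toFinite _)).symm
        rw [hreg z v, ← hd, hdv,
          Set.ncard_insert_of_notMem (by simp [n1, n2]), Set.ncard_pair n3]
      have hNv := hNeq v a b c hva hvb hvc hab.ne hac.ne hbc.ne
      have hNa := hNeq a v b c hav hab hac hvb.ne hvc.ne hbc.ne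
      have hNb := hNeq b v a c hbv hba hbc hva.ne hvc.ne hac.ne
      have hNc := hNeq c v a b hcv hca hcb hva.ne hvb.ne hab.ne
      have hNx : G.neighborSet x ⊆ {y} := by
        intro z hz
        have hzx : G.Adj x z := hz
        rcases huniv z with hzK | rfl | rfl
        · exfalso
          simp only [Set.mem_insert_iff, Set.mem_singleton_iff] at hzK
          rcases hzK with rfl | rfl | rfl | rfl
          · have : x ∈ G.neighborSet z := hzx.symm
            rw [hNv] at this
            exact hxK (by simpa using Or.inr this)
          · have : x ∈ G.neighborSet z := hzx.symm
            rw [hNa] at this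
            simp only [Set.mem_insert_iff, Set.mem_singleton_iff] at this
            exact hxK (by rcases this with rfl | rfl | rfl <;> simp)
          · have : x ∈ G.neighborSet z := hzx.symm
            rw [hNb] at this
            simp only [Set.mem_insert_iff, Set.mem_singleton_iff] at this
            exact hxK (by rcases this with rfl | rfl | rfl <;> simp)
          · have : x ∈ G.neighborSet z := hzx.symm
            rw [hNc] at this
            simp only [Set.mem_insert_iff, Set.mem_singleton_iff] at this
            exact hxK (by rcases this with rfl | rfl | rfl <;> simp)
        · exact absurd rfl hzx.ne'
        · rfl
      have : (G.neighborSet x).ncard ≤ 1 := by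
        rw [← Set.ncard_singleton y]
        exact Set.ncard_le_ncard hNx (Set.toFinite _)
      rw [hreg x v, ← hd, hdv] at this
      omega
    · -- degree 4
      have hinterK : ∀ z : V, z ∉ ({v, a, b, c} : Set V) →
          3 ≤ (G.neighborSet z ∩ {v, a, b, c}).ncard := by
        intro z hzK
        have hsub : G.neighborSet z ⊆
            (G.neighborSet z ∩ {v, a, b, c}) ∪ ((Set.univ \ ({v, a, b, c} : Set V)) \ {z}) := by
          intro w hw
          by_cases hwK : w ∈ ({v, a, b, c} : Set V)
          · exact Or.inl ⟨hw, hwK⟩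
          · exact Or.inr ⟨⟨Set.mem_univ w, hwK⟩, by
              simpa using (G.ne_of_adj hw).symm⟩
        have h2 : ((Set.univ \ ({v, a, b, c} : Set V)) \ ({z} : Set V)).ncard ≤ 1 := by
          rw [Set.ncard_diff (by
            intro w hw
            simp only [Set.mem_singleton_iff] at hw
            subst hw
            exact ⟨Set.mem_univ w, hzK⟩) (Set.toFinite _), hT, Set.ncard_singleton]
        have h3 := Set.ncard_le_ncard hsub (Set.toFinite _)
        have h4 := Set.ncard_union_le (G.neighborSet z ∩ {v, a, b, c})
          ((Set.univ \ ({v, a, b, c} : Set V)) \ {z})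
        have h5 : (G.neighborSet z).ncard = 4 := by rw [hreg z v, ← hd, hdv]
        omega
      have hx3 := hinterK x hxK
      have hy3 := hinterK y hyK
      have hun : ((G.neighborSet x ∩ {v, a, b, c}) ∪
          (G.neighborSet y ∩ {v, a, b, c})).ncard ≤ 4 := by
        rw [← hKcard]
        exact Set.ncard_le_ncard (Set.union_subset Set.inter_subset_right
          Set.inter_subset_right) (Set.toFinite _)
      have hint := Set.ncard_inter_add_ncard_union
        (G.neighborSet x ∩ {v, a, b, c}) (G.neighborSet y ∩ {v, a, b, c})
        (Set.toFinite _) (Set.toFinite _)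
      have hpos : 0 < ((G.neighborSet x ∩ {v, a, b, c}) ∩
          (G.neighborSet y ∩ {v, a, b, c})).ncard := by omega
      obtain ⟨z, hz⟩ := (Set.ncard_pos (Set.toFinite _)).mp hpos
      obtain ⟨⟨hzx, hzK⟩, hzy, -⟩ := hz
      have hzx : G.Adj z x := hzx.symm
      have hzy : G.Adj z y := hzy.symm
      -- z is adjacent to 5 distinct vertices, contradicting degree 4
      have key5 : ∀ p q r : V, p ∈ ({v, a, b, c} : Set V) → q ∈ ({v, a, b, c} : Set V) →
          r ∈ ({v, a, b, c} : Set V) → G.Adj z p → G.Adj z q → G.Adj z r →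
          p ≠ q → p ≠ r → q ≠ r → False := by
        intro p q r hpK hqK hrK h1 h2 h3 n1 n2 n3
        have hpx : p ≠ x := fun h => hxK (h ▸ hpK)
        have hpy : p ≠ y := fun h => hyK (h ▸ hpK)
        have hqx : q ≠ x := fun h => hxK (h ▸ hqK)
        have hqy : q ≠ y := fun h => hyK (h ▸ hqK)
        have hrx : r ≠ x := fun h => hxK (h ▸ hrK)
        have hry : r ≠ y := fun h => hyK (h ▸ hrK)
        have h5sub : ({p, q, r, x, y} : Set V) ⊆ G.neighborSet z := by
          intro w hw
          simp only [Set.mem_insert_iff, Set.mem_singleton_iff] at hw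
          rcases hw with rfl | rfl | rfl | rfl | rfl
          exacts [h1, h2, h3, hzx, hzy]
        have h5card : ({p, q, r, x, y} : Set V).ncard = 5 := by
          rw [Set.ncard_insert_of_notMem (by simp [n1, n2, hpx, hpy]),
            Set.ncard_insert_of_notMem (by simp [n3, hqx, hqy]),
            Set.ncard_insert_of_notMem (by simp [hrx, hry]),
            Set.ncard_pair hxy]
        have := Set.ncard_le_ncard h5sub (Set.toFinite _)
        rw [h5card, hreg z v, ← hd, hdv] at this
        omega
      simp only [Set.mem_insert_iff, Set.mem_singleton_iff] at hzK
      rcases hzK with rfl | rfl | rfl | rfl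
      · exact key5 a b c (by simp) (by simp) (by simp) hva hvb hvc hab.ne hac.ne hbc.ne
      · exact key5 v b c (by simp) (by simp) (by simp) hav hab hac hvb.ne hvc.ne hbc.ne
      · exact key5 v a c (by simp) (by simp) (by simp) hbv hba hbc hva.ne hvc.ne hac.ne
      · exact key5 v a b (by simp) (by simp) (by simp) hcv hca hcb hva.ne hvb.ne hab.ne
    · -- degree 5 : G must be K6
      refine card_ne_lemma 6 hK6 h6 (fun z w hzw => ?_)
      have h1 : G.neighborSet z = Set.univ \ {z} :=
        Set.eq_of_subset_of_ncard_le (hNsub z)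
          (by rw [hcompl5 z, hreg z v, ← hd, hdv]) (Set.toFinite _)
      have : w ∈ G.neighborSet z := by
        rw [h1]
        exact ⟨Set.mem_univ w, by simpa using hzw.symm⟩
      exact this

theorem stmt4 [Fintype V] (G : SimpleGraph V)
    (hconn : G.Connected) (hvt : VertexTransitive G)
    (hnb : ¬ G.Colorable 2) (heven : Even (Fintype.card V))
    (hK4 : IsEmpty (G ≃g (⊤ : SimpleGraph (Fin 4))))
    (hK6 : IsEmpty (G ≃g (⊤ : SimpleGraph (Fin 6))))
    (u : V) (C : G.Walk u u) (hC : C.IsCycle) (hCodd : Odd C.length)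
    (hCmin : C.length = oddGirth G)
    (hClen : Fintype.card V ≤ 2 * C.length) :
    ∀ v : V, v ∉ C.support → ({w | w ∈ C.support ∧ G.Adj v w}).ncard ≤ 2 := by
  classical
  intro v hv
  by_contra hgt
  push_neg at hgt
  obtain ⟨a, b, c, ha, hb, hc, hab, hac, hbc⟩ :=
    (Set.two_lt_ncard_iff (Set.toFinite _)).mp hgt
  obtain ⟨haC, hva⟩ := ha
  obtain ⟨hbC, hvb⟩ := hb
  obtain ⟨hcC, hvc⟩ := hc
  have hWc : (C.rotate a haC).IsCycle := hC.rotate haC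
  have hbW : b ∈ (C.rotate a haC).support := (mem_support_rotate C haC).mpr hbC
  have hcW : c ∈ (C.rotate a haC).support := (mem_support_rotate C haC).mpr hcC
  have hvW : v ∉ (C.rotate a haC).support :=
    fun h => hv ((mem_support_rotate C haC).mp h)
  have hWlen : (C.rotate a haC).length = C.length := length_rotate' C haC
  have hoddG : Odd (oddGirth G) := hCmin ▸ hCodd
  rcases cycle_split (C.rotate a haC) hWc hbW hcW (Ne.symm hab) (Ne.symm hac) hbc hvW with
    ⟨s1, s2, s3, p1, p2, p3, w1, w2, w3, hsum⟩ | ⟨s1, s2, s3, p1, p2, p3, w1, w2, w3, hsum⟩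
  · rw [hWlen, hCmin] at hsum
    obtain ⟨l1, l2, l3⟩ := core_lemma hab hbc (Ne.symm hac) s1 s2 s3 p1 p2 p3
      w1 w2 w3 hva hvb hvc hsum hoddG
    have hg3 : oddGirth G = 3 := by omega
    exact no_K4_config hvt hK4 hK6 hva hvb hvc
      (adj_of_length_eq_one l1) (adj_of_length_eq_one l2) (adj_of_length_eq_one l3).symm
      (by rw [hCmin, hg3] at hClen; omega) heven
  · rw [hWlen, hCmin] at hsum
    obtain ⟨l1, l2, l3⟩ := core_lemma hac (Ne.symm hbc) (Ne.symm hab) s1 s2 s3 p1 p2 p3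
      w1 w2 w3 hva hvc hvb hsum hoddG
    have hg3 : oddGirth G = 3 := by omega
    exact no_K4_config hvt hK4 hK6 hva hvb hvc
      (adj_of_length_eq_one l3).symm (adj_of_length_eq_one l2).symm (adj_of_length_eq_one l1)
      (by rw [hCmin, hg3] at hClen; omega) heven
end

section
/- Let G be a non-bipartite connected vertex-transitive finite simple graph of even order, not isomorphic to K₄ or K₆, and let C be a minimum odd cycle with |C| ≥ |G|/2. If a vertex v not on C is adjacent to two vertices u and w of C, then u and w are at distance 2 along C, and the vertices v, u, w together with the middle vertex of the length-2 subpath of C between u and w form a 4-cycle in G. -/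
open SimpleGraph

variable {V : Type*}

section Aux
variable {G : SimpleGraph V}

private lemma end_mem_tail {a b : V} {p : G.Walk a b} (hp : ¬ p.Nil) :
    b ∈ p.support.tail := by
  cases p with
  | nil => simp at hp
  | cons h q => simpa using q.end_mem_support

private lemma mem_support_iff_tail {a x : V} {c : G.Walk a a} (hc : ¬ c.Nil) :
    x ∈ c.support ↔ x ∈ c.support.tail := by
  constructor
  · intro hx
    rw [c.support_eq_cons, List.mem_cons] at hx
    rcases hx with rfl | hx
    · exact end_mem_tail hc
    · exact hx
  · intro hx
    rw [c.support_eq_cons, List.mem_cons]; exact Or.inr hx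

private lemma not_nil_of_ne' {a b : V} {p : G.Walk a b} (h : a ≠ b) : ¬ p.Nil :=
  fun hn => h hn.eq

private lemma take_drop_path [DecidableEq V] {u w : V} {c : G.Walk u u} (hc : c.IsCycle)
    (hw : w ∈ c.support) (hne : u ≠ w) :
    (c.takeUntil w hw).IsPath ∧ (c.dropUntil w hw).IsPath := by
  set p := c.takeUntil w hw with hpdef
  set q := c.dropUntil w hw with hqdef
  have hspec : p.append q = c := c.take_spec hw
  have hnd : (p.support.tail ++ q.support.tail).Nodup := by
    have h2 := hc.support_nodup
    rw [← hspec, Walk.tail_support_append] at h2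
    exact h2
  have hqnil : ¬ q.Nil := not_nil_of_ne' (Ne.symm hne)
  have huq : u ∈ q.support.tail := end_mem_tail hqnil
  have hup : u ∉ p.support.tail := fun h => (List.disjoint_of_nodup_append hnd) h huq
  have hwp : w ∈ p.support.tail := by
    have h3 : w ∈ p.support := p.end_mem_support
    rw [p.support_eq_cons, List.mem_cons] at h3
    rcases h3 with h | h
    · exact absurd h.symm hne
    · exact h
  have hwq : w ∉ q.support.tail := fun h => (List.disjoint_of_nodup_append hnd) hwp h
  constructor
  · apply Walk.IsPath.mk'
    rw [p.support_eq_cons]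
    exact List.nodup_cons.mpr ⟨hup, hnd.of_append_left⟩
  · apply Walk.IsPath.mk'
    rw [q.support_eq_cons]
    exact List.nodup_cons.mpr ⟨hwq, hnd.of_append_right⟩

private lemma oddGirth_le_arc {u w v : V} {p : G.Walk u w} (hp : p.IsPath)
    (hv : v ∉ p.support) (hvu : G.Adj v u) (hvw : G.Adj v w) (hne : u ≠ w)
    (hodd : Odd p.length) : oddGirth G ≤ p.length + 2 := by
  have hvne : v ≠ w := fun h => hv (h ▸ p.end_mem_support)
  let q : G.Walk u v := p.concat hvw.symm
  have hqpath : q.IsPath := by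
    apply Walk.IsPath.mk'
    rw [Walk.support_concat]
    simp only [List.concat_eq_append, List.nodup_append, List.nodup_cons, List.not_mem_nil,
      not_false_iff, List.nodup_nil, and_true, true_and]
    exact ⟨hp.support_nodup, by
      intro x hx y hy hxy
      simp only [List.mem_cons, List.not_mem_nil, or_false] at hy
      subst hy
      exact hv (hxy ▸ hx)⟩
  have hedge : s(v, u) ∉ q.edges := by
    rw [Walk.edges_concat]
    simp only [List.concat_eq_append, List.mem_append, List.mem_cons, List.not_mem_nil, or_false]
    rintro (h | h)
    · exact hv (p.fst_mem_support_of_mem_edges h)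
    · rw [Sym2.eq_iff] at h
      rcases h with ⟨h1, _⟩ | ⟨_, h2⟩
      · exact hvne h1
      · exact hne h2
  let cyc : G.Walk v v := Walk.cons hvu q
  have hcyc : cyc.IsCycle := (Walk.cons_isCycle_iff q hvu).mpr ⟨hqpath, hedge⟩
  have hlen : cyc.length = p.length + 2 := by
    simp only [cyc, q, Walk.length_cons, Walk.length_concat]
  apply Nat.sInf_le
  refine ⟨?_, v, cyc, hcyc, hlen⟩
  obtain ⟨k, hk⟩ := hodd
  exact ⟨k + 1, by omega⟩

private lemma path_length_two {a b : V} (q : G.Walk a b) (hq : q.IsPath)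
    (h2 : q.length = 2) :
    ∃ x, x ∈ q.support ∧ x ≠ a ∧ x ≠ b ∧ s(a, x) ∈ q.edges ∧ s(x, b) ∈ q.edges := by
  cases q with
  | nil => simp at h2
  | cons h1 r =>
    cases r with
    | nil => simp at h2
    | cons hadj r2 =>
      cases r2 with
      | nil =>
        rename_i x
        have hn := hq.support_nodup
        simp only [Walk.support_cons, Walk.support_nil] at hn
        have hxa : x ≠ a := fun h => by subst h; simp at hn
        have hxb : x ≠ b := fun h => by subst h; simp at hn
        exact ⟨x, by simp, hxa, hxb, by simp, by simp⟩
      | cons h3 r3 => simp [Walk.length_cons] at h2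

private lemma key [DecidableEq V] {u w v : V} {c : G.Walk u u} (hc : c.IsCycle)
    (hw : w ∈ c.support) (hne : u ≠ w) (hv : v ∉ c.support)
    (hvu : G.Adj v u) (hvw : G.Adj v w) (hodd : Odd c.length)
    (hmin : c.length = oddGirth G) :
    ∃ x, x ∈ c.support ∧ x ≠ u ∧ x ≠ w ∧ s(u, x) ∈ c.edges ∧ s(x, w) ∈ c.edges := by
  obtain ⟨hppath, hqpath⟩ := take_drop_path hc hw hne
  have hspec := c.take_spec hw
  have hab : (c.takeUntil w hw).length + (c.dropUntil w hw).length = c.length := by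
    conv_rhs => rw [← hspec]
    rw [Walk.length_append]
  have hvp : v ∉ (c.takeUntil w hw).support :=
    fun h => hv (c.support_takeUntil_subset hw h)
  have hvq : v ∉ (c.dropUntil w hw).support :=
    fun h => hv (c.support_dropUntil_subset hw h)
  have hpne : (c.takeUntil w hw).length ≠ 0 :=
    fun h => hne (Walk.eq_of_length_eq_zero h)
  have hqne : (c.dropUntil w hw).length ≠ 0 :=
    fun h => hne (Walk.eq_of_length_eq_zero h).symm
  by_cases hpar : Odd (c.takeUntil w hw).length
  · have hle : oddGirth G ≤ (c.takeUntil w hw).length + 2 :=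
      oddGirth_le_arc hppath hvp hvu hvw hne hpar
    have hq2 : (c.dropUntil w hw).length = 2 := by
      rw [← hmin] at hle
      obtain ⟨k, hk⟩ := hpar
      obtain ⟨m, hm⟩ := hodd
      omega
    obtain ⟨x, hx1, hx2, hx3, he1, he2⟩ := path_length_two _ hqpath hq2
    refine ⟨x, c.support_dropUntil_subset hw hx1, hx3, hx2, ?_, ?_⟩
    · have := c.edges_dropUntil_subset hw he2
      rwa [Sym2.eq_swap] at this
    · have := c.edges_dropUntil_subset hw he1
      rwa [Sym2.eq_swap] at this
  · have hqpar : Odd (c.dropUntil w hw).length := by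
      rw [Nat.odd_iff] at hodd ⊢
      rw [Nat.not_odd_iff] at hpar
      omega
    have hle : oddGirth G ≤ (c.dropUntil w hw).length + 2 :=
      oddGirth_le_arc hqpath hvq hvw hvu (Ne.symm hne) hqpar
    have hp2 : (c.takeUntil w hw).length = 2 := by
      rw [← hmin] at hle
      rw [Nat.not_odd_iff] at hpar
      omega
    obtain ⟨x, hx1, hx2, hx3, he1, he2⟩ := path_length_two _ hppath hp2
    exact ⟨x, c.support_takeUntil_subset hw hx1, hx2, hx3,
      c.edges_takeUntil_subset hw he1, c.edges_takeUntil_subset hw he2⟩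
end Aux

theorem stmt5 [Fintype V] (G : SimpleGraph V)
    (hconn : G.Connected) (hvt : VertexTransitive G)
    (hnb : ¬ G.Colorable 2) (heven : Even (Fintype.card V))
    (hK4 : IsEmpty (G ≃g (⊤ : SimpleGraph (Fin 4))))
    (hK6 : IsEmpty (G ≃g (⊤ : SimpleGraph (Fin 6))))
    (u₀ : V) (C : G.Walk u₀ u₀) (hC : C.IsCycle) (hCodd : Odd C.length)
    (hCmin : C.length = oddGirth G)
    (hClen : Fintype.card V ≤ 2 * C.length)
    (v u w : V) (hv : v ∉ C.support) (hu : u ∈ C.support) (hw : w ∈ C.support)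
    (huw : u ≠ w) (hvu : G.Adj v u) (hvw : G.Adj v w) :
    ∃ x : V, x ∈ C.support ∧ x ≠ u ∧ x ≠ w ∧ x ≠ v ∧
      s(u, x) ∈ C.edges ∧ s(x, w) ∈ C.edges ∧
      G.Adj v u ∧ G.Adj u x ∧ G.Adj x w ∧ G.Adj w v := by
  classical
  have hCnil : ¬ C.Nil := hC.not_nil
  have hcyc := hC.rotate hu
  have hcnil : ¬ (C.rotate u hu).Nil := hcyc.not_nil
  have hmem : ∀ x : V, x ∈ (C.rotate u hu).support ↔ x ∈ C.support := fun x => by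
    rw [mem_support_iff_tail hcnil, mem_support_iff_tail hCnil,
      (C.support_rotate u hu).perm.mem_iff]
  have hedges : ∀ e, e ∈ (C.rotate u hu).edges ↔ e ∈ C.edges := fun e =>
    (C.rotate_edges u hu).perm.mem_iff
  have hlen : (C.rotate u hu).length = C.length := by
    rw [← Walk.length_edges, ← Walk.length_edges]
    exact (C.rotate_edges u hu).perm.length_eq
  obtain ⟨x, hx1, hx2, hx3, he1, he2⟩ :=
    key hcyc ((hmem w).mpr hw) huw (fun h => hv ((hmem v).mp h)) hvu hvw
      (hlen ▸ hCodd) (hlen.trans hCmin)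
  have hx1' : x ∈ C.support := (hmem x).mp hx1
  have he1' : s(u, x) ∈ C.edges := (hedges _).mp he1
  have he2' : s(x, w) ∈ C.edges := (hedges _).mp he2
  exact ⟨x, hx1', hx2, hx3, fun h => hv (h ▸ hx1'), he1', he2',
    hvu, C.adj_of_mem_edges he1', C.adj_of_mem_edges he2', hvw.symm⟩
end

section
/- Let G be a k-regular connected non-bipartite vertex-transitive finite simple graph of even order, and suppose V(G) is partitioned into S and its complement S̄ with |S| = |S̄| + 2 and S̄ an independent set. Then the odd girth of G is at least |V(G)|/2. -/
open SimpleGraph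

variable {V : Type*}

lemma walk_support_eq {G : SimpleGraph V} {u v : V} (p : G.Walk u v) :
    p.support = (List.range (p.length + 1)).map p.getVert := by
  induction p with
  | nil => simp [SimpleGraph.Walk.getVert]
  | cons h q ih =>
    rw [SimpleGraph.Walk.support_cons, SimpleGraph.Walk.length_cons]
    conv_rhs => rw [List.range_succ_eq_map]
    rw [List.map_cons, List.map_map]
    have : (Walk.cons h q).getVert ∘ Nat.succ = q.getVert := by
      funext i; exact SimpleGraph.Walk.getVert_cons_succ q h
    rw [this, SimpleGraph.Walk.getVert_zero, ← ih]

lemma walk_support_dropLast {G : SimpleGraph V} {u v : V} (p : G.Walk u v) :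
    p.support.dropLast = (List.range p.length).map p.getVert := by
  rw [walk_support_eq, List.range_succ, List.map_append]
  simp

lemma getVert_injOn_of_support_nodup {G : SimpleGraph V} {u v : V} (p : G.Walk u v)
    (h : p.support.Nodup) {i j : ℕ} (hi : i ≤ p.length) (hj : j ≤ p.length)
    (hij : p.getVert i = p.getVert j) : i = j := by
  rw [walk_support_eq] at h
  exact List.inj_on_of_nodup_map h (List.mem_range.mpr (by omega))
    (List.mem_range.mpr (by omega)) hij

lemma cycle_dropLast_nodup {G : SimpleGraph V} {u : V} {c : G.Walk u u} (hc : c.IsCycle) :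
    c.support.dropLast.Nodup := by
  have hlen := hc.three_le_length
  have htail : c.support.tail ≠ [] := by
    apply List.ne_nil_of_length_pos
    have := c.length_support
    rw [List.length_tail, this]
    omega
  have hlast : c.support.tail.getLast htail = u := by
    rw [List.getLast_tail]
    exact c.getLast_support
  have hdecomp : c.support.tail = c.support.tail.dropLast ++ [u] := by
    conv_lhs => rw [← List.dropLast_append_getLast htail]
    rw [hlast]
  have hnodup := hc.support_nodup
  rw [hdecomp, List.nodup_append] at hnodup
  obtain ⟨h1, h2, h3⟩ := hnodup
  have hsupp := c.support_eq_cons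
  have : c.support.dropLast = u :: c.support.tail.dropLast := by
    conv_lhs => rw [hsupp]
    rw [List.dropLast_cons_of_ne_nil htail]
  rw [this, List.nodup_cons]
  refine ⟨fun hu => ?_, h1⟩
  exact h3 u hu u (List.mem_singleton_self u) rfl

lemma cycle_getVert_injOn {G : SimpleGraph V} {u : V} {c : G.Walk u u} (hc : c.IsCycle)
    {i j : ℕ} (hi : i < c.length) (hj : j < c.length)
    (hij : c.getVert i = c.getVert j) : i = j := by
  have h := cycle_dropLast_nodup hc
  rw [walk_support_dropLast] at h
  exact List.inj_on_of_nodup_map h (List.mem_range.mpr hi) (List.mem_range.mpr hj) hij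

lemma path_start_edge {G : SimpleGraph V} {u v x : V} (p : G.Walk u v) (hp : p.IsPath)
    (he : s(u, x) ∈ p.edges) : p.getVert 1 = x := by
  cases p with
  | nil => simp at he
  | cons h q =>
    rename_i b
    rw [SimpleGraph.Walk.edges_cons, List.mem_cons] at he
    rcases he with he | he
    · have : x = b := by
        rw [Sym2.congr_right] at he
        exact he
      rw [this, SimpleGraph.Walk.getVert_cons_succ (n := 0), SimpleGraph.Walk.getVert_zero]
    · exact absurd (q.fst_mem_support_of_mem_edges he)
        ((SimpleGraph.Walk.cons_isPath_iff h q).mp hp).2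

lemma exists_odd_cycle_aux {G : SimpleGraph V} :
    ∀ n : ℕ, Odd n → ∀ (u : V) (w : G.Walk u u), w.length = n →
    ∃ (v : V) (c : G.Walk v v), c.IsCycle ∧ Odd c.length := by
  classical
  intro n
  induction n using Nat.strong_induction_on with
  | _ n ih =>
    intro hodd u w hlen
    by_cases hnd : w.support.tail.Nodup
    · cases w with
      | nil =>
        rw [SimpleGraph.Walk.length_nil] at hlen
        exact absurd hodd (by rw [← hlen]; decide)
      | cons h q =>
        rename_i b
        rw [SimpleGraph.Walk.support_cons, List.tail_cons] at hnd
        have hq : q.IsPath := SimpleGraph.Walk.IsPath.mk' hnd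
        have hodd' : Odd (SimpleGraph.Walk.cons h q).length := hlen ▸ hodd
        have hne : s(u, b) ∉ q.edges := by
          intro hmem
          have hrev : q.reverse.IsPath := hq.reverse
          have hmem' : s(u, b) ∈ q.reverse.edges := by
            rw [SimpleGraph.Walk.edges_reverse, List.mem_reverse]; exact hmem
          have h1 := path_start_edge q.reverse hrev hmem'
          have hql : q.length ≠ 0 := by
            intro h0
            have : q.edges = [] := by
              cases q with
              | nil => rfl
              | cons _ _ => simp at h0
            rw [this] at hmem; exact List.not_mem_nil hmem
          have h2 : q.reverse.getVert q.reverse.length = b := by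
            rw [SimpleGraph.Walk.getVert_length]
          have heq : (1 : ℕ) = q.reverse.length := by
            apply getVert_injOn_of_support_nodup q.reverse hrev.support_nodup
              (by rw [SimpleGraph.Walk.length_reverse]; omega) (le_refl _)
            rw [h1, h2]
          rw [SimpleGraph.Walk.length_reverse] at heq
          rw [SimpleGraph.Walk.length_cons, ← heq] at hlen
          exact absurd hodd (by rw [← hlen]; decide)
        exact ⟨u, SimpleGraph.Walk.cons h q,
          (SimpleGraph.Walk.cons_isCycle_iff q h).mpr ⟨hq, hne⟩, hodd'⟩
    · obtain ⟨x, hx⟩ := List.exists_duplicate_iff_not_nodup.mpr hnd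
      have hxs : x ∈ w.support := by
        rw [w.support_eq_cons]
        exact List.mem_cons_of_mem _ hx.mem
      obtain ⟨c', hlenc, hdup'⟩ : ∃ c' : G.Walk x x, c'.length = n ∧ List.Duplicate x c'.support.tail := by
        refine ⟨w.rotate x hxs, ?_, ?_⟩
        · have h1 : (w.takeUntil x hxs).length + (w.dropUntil x hxs).length = w.length := by
            rw [← SimpleGraph.Walk.length_append, w.take_spec hxs]
          rw [SimpleGraph.Walk.rotate, SimpleGraph.Walk.length_append, ← hlen]
          omega
        · rw [List.duplicate_iff_two_le_count] at hx ⊢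
          rw [List.Perm.count_eq (w.support_rotate x hxs).perm]
          exact hx
      cases c' with
      | nil => rw [SimpleGraph.Walk.length_nil] at hlenc; exact absurd hodd (by rw [← hlenc]; decide)
      | cons hadj t =>
        rename_i y
        rw [SimpleGraph.Walk.support_cons, List.tail_cons] at hdup'
        have hxt : x ∈ t.support := hdup'.mem
        have hcount : 2 ≤ t.support.count x := List.duplicate_iff_two_le_count.mp hdup'
        have hts : (t.takeUntil x hxt).append (t.dropUntil x hxt) = t := t.take_spec hxt
        have hcq : (t.takeUntil x hxt).support.count x = 1 :=
          t.count_support_takeUntil_eq_one hxt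
        have hsupp : t.support = (t.takeUntil x hxt).support ++ (t.dropUntil x hxt).support.tail := by
          have h1 := congrArg SimpleGraph.Walk.support hts
          rw [SimpleGraph.Walk.support_append] at h1
          exact h1.symm
        have hrtail : x ∈ (t.dropUntil x hxt).support.tail := by
          by_contra hxx
          rw [hsupp, List.count_append, hcq, List.count_eq_zero_of_not_mem hxx] at hcount
          omega
        have hrlen : 1 ≤ (t.dropUntil x hxt).length := by
          have h1 : (t.dropUntil x hxt).support.tail ≠ [] := List.ne_nil_of_mem hrtail
          have h2 := (t.dropUntil x hxt).length_support
          have h3 := List.length_pos_iff.mpr h1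
          rw [List.length_tail, h2] at h3
          omega
        have hsum : ((t.takeUntil x hxt).length + 1) + (t.dropUntil x hxt).length = n := by
          have h1 := congrArg SimpleGraph.Walk.length hts
          rw [SimpleGraph.Walk.length_append] at h1
          rw [SimpleGraph.Walk.length_cons] at hlenc
          omega
        by_cases ho : Odd ((t.takeUntil x hxt).length + 1)
        · exact ih ((t.takeUntil x hxt).length + 1) (by omega) ho x
            (SimpleGraph.Walk.cons hadj (t.takeUntil x hxt))
            (SimpleGraph.Walk.length_cons _ _)
        · have ho' : Odd (t.dropUntil x hxt).length := by
            rcases hodd with ⟨m, hm⟩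
            rw [Nat.not_odd_iff_even] at ho
            rcases ho with ⟨a, ha⟩
            exact ⟨m - a, by omega⟩
          exact ih (t.dropUntil x hxt).length (by omega) ho' x (t.dropUntil x hxt) rfl

lemma exists_odd_closed_walk {G : SimpleGraph V} (hconn : G.Connected) (hnb : ¬ G.Colorable 2) :
    ∃ (u : V) (w : G.Walk u u), Odd w.length := by
  by_contra hno
  push_neg at hno
  simp only [Nat.not_odd_iff_even] at hno
  apply hnb
  obtain ⟨v₀⟩ := hconn.nonempty
  have walkto : ∀ v, G.Walk v₀ v := fun v => (hconn.preconnected v₀ v).some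
  refine ⟨SimpleGraph.Coloring.mk (fun v => ⟨(walkto v).length % 2, by omega⟩) ?_⟩
  intro a b hab hfeq
  have h1 : (walkto a).length % 2 = (walkto b).length % 2 := by
    have := congrArg Fin.val hfeq
    simpa using this
  have h2 := hno v₀ ((walkto a).append (SimpleGraph.Walk.cons hab (walkto b).reverse))
  rw [SimpleGraph.Walk.length_append, SimpleGraph.Walk.length_cons,
    SimpleGraph.Walk.length_reverse] at h2
  rcases h2 with ⟨m, hm⟩
  omega

lemma cycle_indep_bound {G : SimpleGraph V} {I : Set V} (hI : ∀ a ∈ I, ∀ b ∈ I, ¬ G.Adj a b)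
    {u : V} {c : G.Walk u u} (hc : c.IsCycle) (hodd : Odd c.length)
    [DecidablePred (· ∈ I)] :
    2 * ((Finset.range c.length).filter (fun i => c.getVert i ∈ I)).card + 1 ≤ c.length := by
  have hg3 : 3 ≤ c.length := hc.three_le_length
  set g := c.length with hg
  set T := (Finset.range g).filter (fun i => c.getVert i ∈ I) with hT
  have hadj : ∀ i < g, G.Adj (c.getVert i) (c.getVert ((i+1) % g)) := by
    intro i hi
    by_cases h : i + 1 < g
    · rw [Nat.mod_eq_of_lt h]
      exact c.adj_getVert_succ (by omega)
    · have hig : i + 1 = g := by omega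
      have h2 := c.adj_getVert_succ (i := i) (by omega)
      rw [hig, Nat.mod_self]
      rw [hig, hg] at h2
      rw [SimpleGraph.Walk.getVert_length] at h2
      rw [SimpleGraph.Walk.getVert_zero]
      exact h2
  have hmaps : ∀ i ∈ T, (i+1) % g ∈ (Finset.range g) \ T := by
    intro i hi
    rw [hT, Finset.mem_filter, Finset.mem_range] at hi
    rw [Finset.mem_sdiff, Finset.mem_range]
    refine ⟨Nat.mod_lt _ (by omega), ?_⟩
    rw [hT, Finset.mem_filter]
    rintro ⟨-, hmem⟩
    exact hI _ hi.2 _ hmem (hadj i hi.1)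
  have hinj : Set.InjOn (fun i => (i+1) % g) T := by
    intro i hi j hj hij
    simp only [Finset.coe_filter, Set.mem_setOf_eq, Finset.mem_range, hT] at hi hj
    simp only at hij
    have hi1 : i < g := hi.1
    have hj1 : j < g := hj.1
    by_cases h1 : i + 1 < g <;> by_cases h2 : j + 1 < g
    · rw [Nat.mod_eq_of_lt h1, Nat.mod_eq_of_lt h2] at hij; omega
    · rw [Nat.mod_eq_of_lt h1] at hij
      have : j + 1 = g := by omega
      rw [this, Nat.mod_self] at hij; omega
    · rw [Nat.mod_eq_of_lt h2] at hij
      have : i + 1 = g := by omega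
      rw [this, Nat.mod_self] at hij; omega
    · omega
  have hcard : T.card ≤ ((Finset.range g) \ T).card :=
    Finset.card_le_card_of_injOn _ hmaps hinj
  have hsd : ((Finset.range g) \ T).card = g - T.card := by
    rw [Finset.card_sdiff_of_subset (by rw [hT]; exact Finset.filter_subset _ _), Finset.card_range]
  have hTle : T.card ≤ g := by
    calc T.card ≤ (Finset.range g).card := Finset.card_le_card (by rw [hT]; exact Finset.filter_subset _ _)
    _ = g := Finset.card_range g
  rcases hodd with ⟨m, hm⟩
  omega

theorem stmt6 [Fintype V] (G : SimpleGraph V) (k : ℕ)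
    (hreg : GIsRegular G k) (hconn : G.Connected)
    (hvt : VertexTransitive G) (hnb : ¬ G.Colorable 2)
    (heven : Even (Fintype.card V)) (S : Set V)
    (hind : ∀ a ∈ Sᶜ, ∀ b ∈ Sᶜ, ¬ G.Adj a b)
    (hcard : S.ncard = Sᶜ.ncard + 2) :
    Fintype.card V ≤ 2 * oddGirth G := by
  classical
  set n := Fintype.card V with hn
  -- cardinality of the complement
  have hsum : S.ncard + Sᶜ.ncard = n := by
    rw [S.ncard_add_ncard_compl, Nat.card_eq_fintype_card]
  have hα : Sᶜ.ncard = Sᶜ.toFinset.card := Sᶜ.ncard_eq_toFinset_card'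
  set α : ℕ := Sᶜ.toFinset.card with hαdef
  have hnα : n = 2 * α + 2 := by omega
  -- odd girth is attained
  have hset : {m | Odd m ∧ ∃ (u : V) (c : G.Walk u u), c.IsCycle ∧ c.length = m}.Nonempty := by
    obtain ⟨u, w, hw⟩ := exists_odd_closed_walk hconn hnb
    obtain ⟨v, c, hcyc, hco⟩ := exists_odd_cycle_aux w.length hw u w rfl
    exact ⟨c.length, hco, v, c, hcyc, rfl⟩
  obtain ⟨hgodd, u, c, hcyc, hclen⟩ :
      Odd (oddGirth G) ∧ ∃ (u : V) (c : G.Walk u u), c.IsCycle ∧ c.length = oddGirth G :=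
    Nat.sInf_mem hset
  set g := oddGirth G with hgdef
  -- automorphism group
  have hfin : Finite (G ≃g G) :=
    Finite.of_injective (fun φ => (φ : V → V)) (fun a b hab => by
      ext x; exact congrFun hab x)
  have : Fintype (G ≃g G) := Fintype.ofFinite _
  set A : Finset (G ≃g G) := Finset.univ with hA
  -- key per-automorphism bound
  have hkey : ∀ φ : G ≃g G,
      2 * ((Finset.range g).filter (fun i => φ.symm (c.getVert i) ∈ Sᶜ)).card + 1 ≤ g := by
    intro φ
    have hIφ : ∀ a ∈ {x | φ.symm x ∈ Sᶜ}, ∀ b ∈ {x | φ.symm x ∈ Sᶜ}, ¬ G.Adj a b := by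
      intro a ha b hb hab
      exact hind _ ha _ hb ((φ.symm : G ≃g G).map_adj_iff.mpr hab)
    have hodd' : Odd c.length := by rw [hclen]; exact hgodd
    have hb := cycle_indep_bound hIφ hcyc hodd'
    rw [hclen] at hb
    simpa using hb
  -- counting functions
  set cnt : (G ≃g G) → ℕ :=
    fun φ => ((Finset.range g).filter (fun i => φ.symm (c.getVert i) ∈ Sᶜ)).card with hcnt
  set N : V → ℕ := fun v => (A.filter (fun φ => φ.symm v ∈ Sᶜ)).card with hN
  have hNconst : ∀ v w : V, N v = N w := by
    intro v w
    obtain ⟨ψ, hψ⟩ := hvt v w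
    have hψ' : ψ.symm w = v := by rw [← hψ]; exact ψ.symm_apply_apply v
    apply Finset.card_bij (fun φ _ => φ.trans ψ)
    · intro φ hφ
      rw [Finset.mem_filter] at hφ ⊢
      refine ⟨Finset.mem_univ _, ?_⟩
      have heq : (φ.trans ψ).symm w = φ.symm v := by
        show φ.symm (ψ.symm w) = φ.symm v
        rw [hψ']
      rw [heq]
      exact hφ.2
    · intro a ha b hb hab
      have hpt : ∀ x, a x = b x := by
        intro x
        have := DFunLike.congr_fun hab x
        simp only [RelIso.trans_apply] at this
        exact ψ.toEquiv.injective this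
      exact DFunLike.ext a b hpt
    · intro φ' hφ'
      rw [Finset.mem_filter] at hφ'
      refine ⟨φ'.trans ψ.symm, Finset.mem_filter.mpr ⟨Finset.mem_univ _, ?_⟩, ?_⟩
      · have heq : (φ'.trans ψ.symm).symm v = φ'.symm w := by
          show φ'.symm (ψ.symm.symm v) = φ'.symm w
          have : ψ.symm.symm v = ψ v := rfl
          rw [this, hψ]
        rw [heq]
        exact hφ'.2
      · apply DFunLike.ext
        intro x
        simp only [RelIso.trans_apply]
        exact ψ.apply_symm_apply (φ' x)
  have h1 : ∑ φ ∈ A, cnt φ = ∑ i ∈ Finset.range g, N (c.getVert i) := by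
    simp only [hcnt, hN, Finset.card_filter]
    rw [Finset.sum_comm]
  have h2 : ∑ i ∈ Finset.range g, N (c.getVert i) = g * N u := by
    rw [Finset.sum_congr rfl (fun i _ => hNconst (c.getVert i) u), Finset.sum_const,
      Finset.card_range, smul_eq_mul]
  have h3 : ∑ v : V, N v = A.card * α := by
    simp only [hN, Finset.card_filter]
    rw [Finset.sum_comm]
    have hinner : ∀ φ : G ≃g G,
        (∑ v : V, if φ.symm v ∈ Sᶜ then 1 else 0) = α := by
      intro φ
      rw [← Finset.card_filter]
      apply Finset.card_bij (fun v _ => φ.symm v)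
      · intro v hv
        rw [Finset.mem_filter] at hv
        exact Set.mem_toFinset.mpr hv.2
      · intro a _ b _ hab
        exact φ.toEquiv.symm.injective hab
      · intro w hw
        refine ⟨φ w, Finset.mem_filter.mpr ⟨Finset.mem_univ _, ?_⟩, ?_⟩
        · rw [φ.symm_apply_apply w]
          exact Set.mem_toFinset.mp hw
        · exact φ.symm_apply_apply w
    rw [Finset.sum_congr rfl (fun φ _ => hinner φ), Finset.sum_const, smul_eq_mul]
  have h4 : ∑ v : V, N v = n * N u := by
    rw [Finset.sum_congr rfl (fun v _ => hNconst v u), Finset.sum_const, smul_eq_mul,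
      Finset.card_univ]
  have h5 : n * N u = A.card * α := by rw [← h4, h3]
  have h6 : 2 * (g * N u) + A.card ≤ A.card * g := by
    have hsle : ∑ φ ∈ A, (2 * cnt φ + 1) ≤ ∑ φ ∈ A, g :=
      Finset.sum_le_sum (fun φ _ => hkey φ)
    rw [Finset.sum_add_distrib, ← Finset.mul_sum, Finset.sum_const, smul_eq_mul, mul_one,
      Finset.sum_const, smul_eq_mul] at hsle
    rw [h1, h2] at hsle
    omega
  have hApos : 0 < A.card := by
    rw [hA, Finset.card_univ]
    exact Fintype.card_pos_iff.mpr ⟨RelIso.refl _⟩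
  -- multiply h6 by n and substitute
  have h7 : A.card * (2 * g * α + n) ≤ A.card * (n * g) := by
    have := Nat.mul_le_mul_left n h6
    calc A.card * (2 * g * α + n) = 2 * g * (A.card * α) + n * A.card := by ring
    _ = 2 * g * (n * N u) + n * A.card := by rw [h5]
    _ = n * (2 * (g * N u) + A.card) := by ring
    _ ≤ n * (A.card * g) := this
    _ = A.card * (n * g) := by ring
  have h8 : 2 * g * α + n ≤ n * g := Nat.le_of_mul_le_mul_left h7 hApos
  have h9 : n * g = 2 * g * α + 2 * g := by rw [hnα]; ring
  omega
end

section
/- Let G be a bipartite graph with bipartition (W, B), |W| = |B|, and let F be a minimal (with respect to inclusion) set of edges such that G − F has no perfect matching but G − F + e has a perfect matching for every e ∈ F. If G is k-regular and |F| = k, then F is an edge cut of G. -/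
open SimpleGraph

variable {V : Type*}

/-- `F` is an edge cut of `G`: the set of all edges between `X` and its complement,
for some `X` with both `X` and `Xᶜ` nonempty. -/
def IsEdgeCut (G : SimpleGraph V) (F : Set (Sym2 V)) : Prop :=
  ∃ X : Set V, X.Nonempty ∧ Xᶜ.Nonempty ∧
    F = {e | ∃ a ∈ X, ∃ b ∈ Xᶜ, G.Adj a b ∧ e = s(a, b)}

open Finset in
private lemma hall_pm [Fintype V] [DecidableEq V] (H : SimpleGraph V) [DecidableRel H.Adj] (W : Set V)
    (hbip : ∀ a b : V, H.Adj a b → ((a ∈ W ∧ b ∉ W) ∨ (a ∉ W ∧ b ∈ W)))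
    (hWB : W.ncard = Wᶜ.ncard)
    (hhall : ∀ S : Finset V, ↑S ⊆ W → S.card ≤ (S.biUnion (fun v => H.neighborFinset v)).card) :
    HasPerfectMatching H := by
  classical
  have hhall' : ∀ s : Finset ↥W, s.card ≤ (s.biUnion fun x => H.neighborFinset ↑x).card := by
    intro s
    have h1 : (s.image (Subtype.val)).card = s.card := card_image_of_injective _ Subtype.val_injective
    have h2 : (s.image Subtype.val).biUnion (fun v => H.neighborFinset v) = s.biUnion fun x => H.neighborFinset ↑x := by
      ext y; simp
    have h3 : ↑(s.image (Subtype.val : ↥W → V)) ⊆ W := by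
      intro x hx
      simp only [coe_image, Set.mem_image, mem_coe] at hx
      obtain ⟨y, _, rfl⟩ := hx
      exact y.2
    calc s.card = (s.image Subtype.val).card := h1.symm
      _ ≤ _ := hhall _ h3
      _ = _ := by rw [h2]
  obtain ⟨f, hfinj, hf⟩ :=
    (Finset.all_card_le_biUnion_card_iff_existsInjective' (fun x : ↥W => H.neighborFinset ↑x)).mp hhall'
  have hadj : ∀ x : ↥W, H.Adj ↑x (f x) := fun x => (H.mem_neighborFinset _ _).mp (hf x)
  have hfW : ∀ x : ↥W, f x ∈ Wᶜ := by
    intro x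
    rcases hbip _ _ (hadj x) with ⟨_, h⟩ | ⟨h, _⟩
    · exact h
    · exact absurd x.2 h
  let f' : ↥W → ↥Wᶜ := fun x => ⟨f x, hfW x⟩
  have hf'inj : Function.Injective f' := fun a b h => hfinj (congrArg Subtype.val h)
  have hcard : Fintype.card ↥W = Fintype.card ↥Wᶜ := by
    rw [← Nat.card_eq_fintype_card, ← Nat.card_eq_fintype_card, Nat.card_coe_set_eq,
      Nat.card_coe_set_eq, hWB]
  have hbij : Function.Bijective f' := (Fintype.bijective_iff_injective_and_card f').mpr ⟨hf'inj, hcard⟩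
  let e : ↥W ≃ ↥Wᶜ := Equiv.ofBijective f' hbij
  have he : ∀ x : ↥W, (e x : V) = f x := fun x => rfl
  have hsub : ∀ {a b : V}, ((∃ ha : a ∈ W, (e ⟨a, ha⟩ : V) = b) ∨ (∃ hb : b ∈ W, (e ⟨b, hb⟩ : V) = a)) → H.Adj a b := by
    rintro a b (⟨ha, rfl⟩ | ⟨hb, rfl⟩)
    · exact hadj ⟨a, ha⟩
    · exact (hadj ⟨b, hb⟩).symm
  let M : H.Subgraph :=
    { verts := Set.univ
      Adj := fun a b => (∃ ha : a ∈ W, (e ⟨a, ha⟩ : V) = b) ∨ (∃ hb : b ∈ W, (e ⟨b, hb⟩ : V) = a)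
      adj_sub := hsub
      edge_vert := fun _ => trivial
      symm := ⟨fun a b h => Or.symm h⟩ }
  refine ⟨M, ?_, fun v => trivial⟩
  intro v _
  by_cases hv : v ∈ W
  · refine ⟨(e ⟨v, hv⟩ : V), Or.inl ⟨hv, rfl⟩, ?_⟩
    rintro w (⟨hv', rfl⟩ | ⟨hw, hw'⟩)
    · rfl
    · exact absurd hv (by simpa using hw' ▸ (e ⟨w, hw⟩).2)
  · refine ⟨(e.symm ⟨v, hv⟩ : V), Or.inr ⟨(e.symm ⟨v, hv⟩).2, ?_⟩, ?_⟩
    · rw [Subtype.coe_eta, Equiv.apply_symm_apply]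
    · rintro w (⟨hv', _⟩ | ⟨hw, hw'⟩)
      · exact absurd hv' hv
      · have h1 : e ⟨w, hw⟩ = ⟨v, hv⟩ := Subtype.ext hw'
        have h2 : e.symm ⟨v, hv⟩ = ⟨w, hw⟩ := by rw [← h1, Equiv.symm_apply_apply]
        exact (congrArg Subtype.val h2).symm

open Finset in
private lemma aux_main [Fintype V] [DecidableEq V] (G : SimpleGraph V) (k : ℕ) (W : Set V)
    (hbip : ∀ a b : V, G.Adj a b → ((a ∈ W ∧ b ∉ W) ∨ (a ∉ W ∧ b ∈ W)))
    (hWB : W.ncard = Wᶜ.ncard)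
    (hreg : ∀ v : V, (G.neighborSet v).ncard = k)
    (F : Finset (Sym2 V)) (hFE : ↑F ⊆ G.edgeSet)
    (hnopm : ¬ HasPerfectMatching (G.deleteEdges ↑F))
    (hFk : F.card = k) :
    ∃ X : Set V, X.Nonempty ∧ Xᶜ.Nonempty ∧
      (↑F : Set (Sym2 V)) = {e | ∃ a ∈ X, ∃ b ∈ Xᶜ, G.Adj a b ∧ e = s(a, b)} := by
  classical
  have hGdeg : ∀ a : V, (G.neighborFinset a).card = k := by
    intro a
    rw [neighborFinset_def, ← Set.ncard_eq_toFinset_card']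
    exact hreg a
  rcases Nat.eq_zero_or_pos k with hk0 | hkpos
  · -- k = 0 : no edges at all
    have hF0 : F = ∅ := Finset.card_eq_zero.mp (by rw [hFk, hk0])
    have hnoadj : ∀ a b : V, ¬ G.Adj a b := by
      intro a b hab
      have h1 : (G.neighborSet a) = ∅ := by
        have := hreg a
        rw [hk0] at this
        exact (Set.ncard_eq_zero (Set.toFinite _)).mp this
      exact absurd (h1 ▸ hab : b ∈ (∅ : Set V)) (Set.notMem_empty b)
    have hVne : Nonempty V := by
      by_contra h
      have hE : IsEmpty V := not_nonempty_iff.mp h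
      exact hnopm ⟨⊥, fun v _ => (hE.false v).elim, fun v => (hE.false v).elim⟩
    have hWne : W.Nonempty := by
      rcases Set.eq_empty_or_nonempty W with h | h
      · exfalso
        have h1 : Wᶜ.ncard = 0 := by rw [← hWB, h, Set.ncard_empty]
        have h2 : Wᶜ = ∅ := (Set.ncard_eq_zero (Set.toFinite _)).mp h1
        obtain ⟨v⟩ := hVne
        rcases Classical.em (v ∈ W) with hv | hv
        · exact (h ▸ hv : v ∈ (∅ : Set V))
        · exact (h2 ▸ hv : v ∈ (∅ : Set V))
      · exact h
    have hWcne : Wᶜ.Nonempty := by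
      have hpos : 0 < Wᶜ.ncard := by
        rw [← hWB]
        exact (Set.ncard_pos (Set.toFinite _)).mpr hWne
      exact Set.nonempty_of_ncard_ne_zero hpos.ne'
    refine ⟨W, hWne, hWcne, ?_⟩
    ext e
    simp only [hF0, Finset.coe_empty, Set.mem_empty_iff_false, Set.mem_setOf_eq, false_iff]
    rintro ⟨a, _, b, _, hab, _⟩
    exact hnoadj a b hab
  -- main case k ≥ 1
  set H := G.deleteEdges ↑F with hHdef
  have hHadj : ∀ a b : V, H.Adj a b ↔ G.Adj a b ∧ s(a, b) ∉ F := by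
    intro a b
    rw [hHdef, deleteEdges_adj]
    simp
  have hbipH : ∀ a b : V, H.Adj a b → ((a ∈ W ∧ b ∉ W) ∨ (a ∉ W ∧ b ∈ W)) :=
    fun a b h => hbip a b ((hHadj a b).mp h).1
  obtain ⟨S, hSW, hNS⟩ : ∃ S : Finset V, ↑S ⊆ W ∧
      (S.biUnion (fun v => H.neighborFinset v)).card < S.card := by
    by_contra hc
    push_neg at hc
    exact hnopm (hall_pm H W hbipH hWB hc)
  set N := S.biUnion (fun v => H.neighborFinset v) with hNdef
  set FN : V → Finset V := fun a => (G.neighborFinset a).filter (fun b => s(a, b) ∈ F) with hFNdef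
  have hHnbr : ∀ a : V, H.neighborFinset a = (G.neighborFinset a).filter (fun b => s(a, b) ∉ F) := by
    intro a
    ext b
    simp [hHadj a b]
  have hsplit : ∀ a : V, (FN a).card + (H.neighborFinset a).card = k := by
    intro a
    rw [hHnbr, hFNdef]
    rw [Finset.card_filter_add_card_filter_not]
    exact hGdeg a
  have hSno : ∀ a ∈ S, ∀ b : V, G.Adj a b → b ∉ W := by
    intro a ha b hab
    rcases hbip a b hab with ⟨_, h⟩ | ⟨h, _⟩
    · exact h
    · exact absurd (hSW ha) h
  -- the F-incidence count
  have hinj1 : Set.InjOn (fun p : (_ : V) × V => s(p.1, p.2)) ↑(S.sigma FN) := by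
    rintro ⟨a, b⟩ hab ⟨a', b'⟩ hab' heq
    simp only [Finset.coe_sigma, Set.mem_sigma_iff, Finset.mem_coe, Finset.mem_sigma] at hab hab'
    simp only [Sym2.eq_iff] at heq
    have hb' : b' ∉ W :=
      hSno a' hab'.1 b' ((mem_neighborFinset _ _ _).mp (Finset.mem_filter.mp hab'.2).1)
    have hb : b ∉ W :=
      hSno a hab.1 b ((mem_neighborFinset _ _ _).mp (Finset.mem_filter.mp hab.2).1)
    rcases heq with ⟨h1, h2⟩ | ⟨h1, h2⟩
    · simp [h1, h2]
    · exact absurd (hSW hab.1) (h1 ▸ hb')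
  have hFmaps : ∀ p ∈ S.sigma FN, s(p.1, p.2) ∈ F := by
    rintro ⟨a, b⟩ hp
    exact (Finset.mem_filter.mp (Finset.mem_sigma.mp hp).2).2
  have hfSle : (∑ a ∈ S, (FN a).card) ≤ k := by
    rw [← Finset.card_sigma, ← hFk]
    exact Finset.card_le_card_of_injOn _ hFmaps hinj1
  -- H-edge incidence count
  have hswapmaps : ∀ p ∈ S.sigma (fun a => H.neighborFinset a),
      (⟨p.2, p.1⟩ : (_ : V) × V) ∈ N.sigma (fun b => H.neighborFinset b) := by
    rintro ⟨a, b⟩ hp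
    rw [Finset.mem_sigma] at hp ⊢
    refine ⟨Finset.mem_biUnion.mpr ⟨a, hp.1, hp.2⟩, ?_⟩
    exact (mem_neighborFinset _ _ _).mpr ((mem_neighborFinset _ _ _).mp hp.2).symm
  have hinj2 : Set.InjOn (fun p : (_ : V) × V => (⟨p.2, p.1⟩ : (_ : V) × V))
      ↑(S.sigma (fun a => H.neighborFinset a)) := by
    rintro ⟨a, b⟩ _ ⟨a', b'⟩ _ heq
    have h1 : b = b' ∧ a = a' := by simpa using heq
    simp [h1.1, h1.2]
  have hsum2 : (∑ a ∈ S, (H.neighborFinset a).card) ≤ ∑ b ∈ N, (H.neighborFinset b).card := by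
    rw [← Finset.card_sigma, ← Finset.card_sigma]
    exact Finset.card_le_card_of_injOn _ hswapmaps hinj2
  have hdegHle : ∀ b : V, (H.neighborFinset b).card ≤ k := fun b => le_of_add_le_right (hsplit b).le
  have hsum3 : (∑ b ∈ N, (H.neighborFinset b).card) ≤ k * N.card := by
    calc (∑ b ∈ N, (H.neighborFinset b).card) ≤ ∑ _b ∈ N, k :=
          Finset.sum_le_sum (fun b _ => hdegHle b)
      _ = k * N.card := by rw [Finset.sum_const, smul_eq_mul, mul_comm]
  have hsumtot : (∑ a ∈ S, (FN a).card) + (∑ a ∈ S, (H.neighborFinset a).card) = k * S.card := by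
    rw [← Finset.sum_add_distrib]
    calc (∑ a ∈ S, ((FN a).card + (H.neighborFinset a).card)) = ∑ _a ∈ S, k :=
          Finset.sum_congr rfl (fun a _ => hsplit a)
      _ = k * S.card := by rw [Finset.sum_const, smul_eq_mul, mul_comm]
  have hScard : N.card + 1 ≤ S.card := hNS
  have hmul : k * (N.card + 1) ≤ k * S.card := Nat.mul_le_mul_left k hScard
  have hmul' : k * (N.card + 1) = k * N.card + k := by ring
  -- equalities
  have hfSk : (∑ a ∈ S, (FN a).card) = k := by
    have h := hsum2.trans hsum3
    omega
  have hsumSH : (∑ a ∈ S, (H.neighborFinset a).card) = k * N.card := by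
    have h := hsum2.trans hsum3
    omega
  have hcardSN : S.card = N.card + 1 := by
    have h : k * S.card = k * (N.card + 1) := by omega
    exact Nat.eq_of_mul_eq_mul_left hkpos h
  -- F is exactly the set of edges from S into B \ N
  have hFeq : (S.sigma FN).image (fun p => s(p.1, p.2)) = F := by
    apply Finset.eq_of_subset_of_card_le
    · intro e he
      obtain ⟨p, hp, rfl⟩ := Finset.mem_image.mp he
      exact hFmaps p hp
    · rw [Finset.card_image_of_injOn hinj1, Finset.card_sigma, hFk, hfSk]
  -- the swapped image equals N.sigma
  have himg_eq : (S.sigma (fun a => H.neighborFinset a)).image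
      (fun p : (_ : V) × V => (⟨p.2, p.1⟩ : (_ : V) × V)) = N.sigma (fun b => H.neighborFinset b) := by
    apply Finset.eq_of_subset_of_card_le
    · intro q hq
      obtain ⟨p, hp, rfl⟩ := Finset.mem_image.mp hq
      exact hswapmaps p hp
    · rw [Finset.card_image_of_injOn hinj2, Finset.card_sigma, Finset.card_sigma, hsumSH]
      exact hsum3
  have hsumN : (∑ b ∈ N, (H.neighborFinset b).card) = k * N.card :=
    le_antisymm hsum3 (by rw [← hsumSH]; exact hsum2)
  have hdegN : ∀ b ∈ N, (H.neighborFinset b).card = k := by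
    intro b hb
    by_contra hne
    have hlt : (H.neighborFinset b).card < k := lt_of_le_of_ne (hdegHle b) hne
    have : (∑ c ∈ N, (H.neighborFinset c).card) < ∑ _c ∈ N, k :=
      Finset.sum_lt_sum (fun c _ => hdegHle c) ⟨b, hb, hlt⟩
    rw [Finset.sum_const, smul_eq_mul, mul_comm, ← hsumN] at this
    exact lt_irrefl _ this
  have hNbrS : ∀ b ∈ N, ∀ a : V, H.Adj b a → a ∈ S := by
    intro b hb a hadj
    have hq : (⟨b, a⟩ : (_ : V) × V) ∈ N.sigma (fun c => H.neighborFinset c) :=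
      Finset.mem_sigma.mpr ⟨hb, (mem_neighborFinset _ _ _).mpr hadj⟩
    rw [← himg_eq] at hq
    obtain ⟨⟨a', b'⟩, hp, heq⟩ := Finset.mem_image.mp hq
    have h1 : b' = b ∧ a' = a := by simpa using heq
    exact h1.2 ▸ (Finset.mem_sigma.mp hp).1
  have hNfull : ∀ b ∈ N, H.neighborFinset b = G.neighborFinset b := by
    intro b hb
    refine Finset.eq_of_subset_of_card_le ?_ (by rw [hdegN b hb, hGdeg])
    rw [hHnbr]
    exact Finset.filter_subset _ _
  have hNnoF : ∀ b ∈ N, ∀ a : V, G.Adj b a → s(b, a) ∉ F := by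
    intro b hb a hadj
    have : a ∈ H.neighborFinset b := by
      rw [hNfull b hb]
      exact (mem_neighborFinset _ _ _).mpr hadj
    rw [hHnbr] at this
    exact (Finset.mem_filter.mp this).2
  have hNW : ∀ b ∈ N, b ∉ W := by
    intro b hb
    obtain ⟨a, ha, hab⟩ := Finset.mem_biUnion.mp hb
    exact hSno a ha b ((mem_neighborFinset _ _ _).mp hab |> (hHadj a b).mp).1
  -- nonemptiness
  have hSne : S.Nonempty := Finset.card_pos.mp (by omega)
  have hWfc : W.toFinset.card = Wᶜ.toFinset.card := by
    rw [← Set.ncard_eq_toFinset_card', ← Set.ncard_eq_toFinset_card', hWB]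
  have hNsubB : N ⊆ Wᶜ.toFinset := fun b hb => Set.mem_toFinset.mpr (hNW b hb)
  have hSsubW : S ⊆ W.toFinset := fun a ha => Set.mem_toFinset.mpr (hSW ha)
  have hNlt : N.card < Wᶜ.toFinset.card := by
    have h1 : S.card ≤ W.toFinset.card := Finset.card_le_card hSsubW
    omega
  obtain ⟨b0, hb0B, hb0N⟩ : ∃ b0 ∈ Wᶜ.toFinset, b0 ∉ N := by
    have : (Wᶜ.toFinset \ N).Nonempty := Finset.card_pos.mp (by rw [Finset.card_sdiff_of_subset hNsubB]; omega)
    obtain ⟨b0, hb0⟩ := this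
    exact ⟨b0, (Finset.mem_sdiff.mp hb0).1, (Finset.mem_sdiff.mp hb0).2⟩
  refine ⟨↑S ∪ ↑N, ⟨hSne.choose, Or.inl hSne.choose_spec⟩, ⟨b0, ?_⟩, ?_⟩
  · rintro (h | h)
    · exact absurd (hSW h) (Set.mem_toFinset.mp hb0B)
    · exact hb0N h
  ext e
  simp only [Finset.mem_coe, Set.mem_setOf_eq]
  constructor
  · intro he
    rw [← hFeq] at he
    obtain ⟨⟨a, b⟩, hp, rfl⟩ := Finset.mem_image.mp he
    obtain ⟨haS, hbFN⟩ := Finset.mem_sigma.mp hp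
    have hadj : G.Adj a b := (mem_neighborFinset _ _ _).mp (Finset.mem_filter.mp hbFN).1
    have hbF : s(a, b) ∈ F := (Finset.mem_filter.mp hbFN).2
    refine ⟨a, Or.inl haS, b, ?_, hadj, rfl⟩
    rintro (h | h)
    · exact absurd (hSW h) (hSno a haS b hadj)
    · exact hNnoF b h a hadj.symm (Sym2.eq_swap ▸ hbF)
  · rintro ⟨a, haX, b, hbX, hadj, rfl⟩
    rcases haX with haS | haN
    · by_cases hF : s(a, b) ∈ F
      · exact hF
      · exfalso
        apply hbX
        exact Or.inr (Finset.mem_biUnion.mpr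
          ⟨a, haS, (mem_neighborFinset _ _ _).mpr ((hHadj a b).mpr ⟨hadj, hF⟩)⟩)
    · exfalso
      apply hbX
      have hbH : b ∈ H.neighborFinset a := by
        rw [hNfull a haN]
        exact (mem_neighborFinset _ _ _).mpr hadj
      exact Or.inl (hNbrS a haN b ((mem_neighborFinset _ _ _).mp hbH))


theorem stmt8 [Fintype V] [DecidableEq V] (G : SimpleGraph V) (k : ℕ) (W : Set V)
    (hbip : ∀ a b : V, G.Adj a b → ((a ∈ W ∧ b ∉ W) ∨ (a ∉ W ∧ b ∈ W)))
    (hWB : W.ncard = Wᶜ.ncard)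
    (hreg : GIsRegular G k)
    (F : Finset (Sym2 V)) (hFE : ↑F ⊆ G.edgeSet)
    (hnopm : ¬ HasPerfectMatching (G.deleteEdges ↑F))
    (hminimal : ∀ e ∈ F, HasPerfectMatching (G.deleteEdges ↑(F.erase e)))
    (hFk : F.card = k) :
    IsEdgeCut G ↑F :=
  aux_main G k W hbip hWB hreg F hFE hnopm hFk
end

section
/- The Petersen graph has a matching preclusion set of size 3 that is not the set of edges incident to a single vertex; consequently, the Petersen graph is not super matched. -/
open SimpleGraph

variable {V : Type*}

/-- The Petersen graph, realized as the Kneser graph `K(5,2)`. -/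
def petersenGraph : SimpleGraph {s : Finset (Fin 5) // s.card = 2} where
  Adj x y := Disjoint x.1 y.1
  symm := ⟨fun _ _ h => h.symm⟩
  loopless := ⟨by
    intro x h
    have h1 : x.1 = ∅ := (Finset.disjoint_self_iff_empty _).mp h
    have h2 := x.2
    simp [h1] at h2⟩

/-- `G` is super matched: its matching preclusion number equals its minimum degree
and every optimal matching preclusion set is the star of a vertex. -/
def SuperMatched {V : Type*} (G : SimpleGraph V) : Prop :=
  mpNumber G = minDeg G ∧
  ∀ F : Finset (Sym2 V), IsMPSet G F → F.card = mpNumber G →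
    ∃ v : V, ↑F = G.incidenceSet v

/-! ### Auxiliary machinery -/

abbrev PV := {s : Finset (Fin 5) // s.card = 2}

instance petersenAdjDec : DecidableRel petersenGraph.Adj := fun x y =>
  inferInstanceAs (Decidable (Disjoint x.1 y.1))

def pv01 : PV := ⟨{0, 1}, by decide⟩
def pv23 : PV := ⟨{2, 3}, by decide⟩
def pv02 : PV := ⟨{0, 2}, by decide⟩
def pv13 : PV := ⟨{1, 3}, by decide⟩
def pv03 : PV := ⟨{0, 3}, by decide⟩
def pv12 : PV := ⟨{1, 2}, by decide⟩

def Fset : Finset (Sym2 PV) := {s(pv01, pv23), s(pv02, pv13), s(pv03, pv12)}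

def allPV : List PV :=
  [⟨{0, 1}, by decide⟩, ⟨{0, 2}, by decide⟩, ⟨{0, 3}, by decide⟩, ⟨{0, 4}, by decide⟩,
   ⟨{1, 2}, by decide⟩, ⟨{1, 3}, by decide⟩, ⟨{1, 4}, by decide⟩, ⟨{2, 3}, by decide⟩,
   ⟨{2, 4}, by decide⟩, ⟨{3, 4}, by decide⟩]

instance delAdjDec : DecidableRel (petersenGraph.deleteEdges ↑Fset).Adj := fun x y =>
  decidable_of_iff (petersenGraph.Adj x y ∧ s(x, y) ∉ Fset) (by
    rw [SimpleGraph.deleteEdges_adj]; simp)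

/-- Fuel-based exhaustive search for a perfect matching on a list of vertices. -/
def pmAux {α : Type*} [DecidableEq α] (G : SimpleGraph α) [DecidableRel G.Adj] :
    ℕ → List α → Bool
  | _, [] => true
  | 0, _ :: _ => false
  | n + 1, v :: rest => rest.any fun w => decide (G.Adj v w) && pmAux G n (rest.erase w)

lemma pmAux_of_hasPM {α : Type*} [DecidableEq α] (G : SimpleGraph α)
    [DecidableRel G.Adj] (h : HasPerfectMatching G) (l : List α)
    (hnd : l.Nodup) (hall : ∀ x : α, x ∈ l) :
    pmAux G l.length l = true := by
  obtain ⟨M, hm, hs⟩ := h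
  choose f hadj huniq using fun v => hm (hs v)
  have hinv : ∀ v, f (f v) = v := fun v => (huniq (f v) v ((hadj v).symm)).symm
  have hGadj : ∀ v, G.Adj v (f v) := fun v => M.adj_sub (hadj v)
  have hne : ∀ v, f v ≠ v := fun v => ((hadj v).ne).symm
  suffices H : ∀ n (l : List α), l.length ≤ n → l.Nodup → (∀ x ∈ l, f x ∈ l) →
      pmAux G n l = true by
    exact H _ _ le_rfl hnd (fun x _ => hall _)
  intro n
  induction n with
  | zero =>
    intro l hl _ _
    have : l = [] := List.eq_nil_of_length_eq_zero (Nat.le_zero.mp hl)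
    subst this; rfl
  | succ n ih =>
    intro l hl hnd hcl
    match l with
    | [] => rfl
    | v :: rest =>
      have hvrest : v ∉ rest := (List.nodup_cons.mp hnd).1
      have hndr : rest.Nodup := (List.nodup_cons.mp hnd).2
      have hw : f v ∈ rest := by
        rcases List.mem_cons.mp (hcl v List.mem_cons_self) with h | h
        · exact absurd h (hne v)
        · exact h
      rw [pmAux, List.any_eq_true]
      refine ⟨f v, hw, ?_⟩
      rw [Bool.and_eq_true, decide_eq_true_iff]
      refine ⟨hGadj v, ih _ ?_ (hndr.erase _) ?_⟩
      · calc (rest.erase (f v)).length ≤ rest.length :=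
              List.erase_sublist.length_le
          _ ≤ n := Nat.succ_le_succ_iff.mp hl
      · intro x hx
        rw [List.Nodup.mem_erase_iff hndr] at hx ⊢
        obtain ⟨hxw, hxr⟩ := hx
        have hxv : x ≠ v := fun h => hvrest (h ▸ hxr)
        have hfx : f x ∈ v :: rest := hcl x (List.mem_cons_of_mem _ hxr)
        have h1 : f x ≠ f v := fun h => hxv (by rw [← hinv x, h, hinv])
        have h2 : f x ≠ v := fun h => hxw (by rw [← hinv x, h])
        refine ⟨h1, ?_⟩
        rcases List.mem_cons.mp hfx with h | h
        · exact absurd h h2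
        · exact h

lemma no_pm_after_deletion : ¬ HasPerfectMatching (petersenGraph.deleteEdges ↑Fset) := by
  intro h
  exact absurd (pmAux_of_hasPM _ h allPV (by decide) (by decide)) (by decide)

lemma Fset_subset_edgeSet : ↑Fset ⊆ petersenGraph.edgeSet := by
  intro e he
  rw [Finset.mem_coe, Fset] at he
  simp only [Finset.mem_insert, Finset.mem_singleton] at he
  rcases he with h | h | h <;> subst h <;>
    exact (SimpleGraph.mem_edgeSet _).mpr (by decide)

lemma Fset_mp : IsMPSet petersenGraph Fset :=
  ⟨Fset_subset_edgeSet, no_pm_after_deletion⟩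

lemma Fset_nontrivial : ¬ ∃ v, ↑Fset = petersenGraph.incidenceSet v := by
  rintro ⟨v, hv⟩
  have h1 : s(pv01, pv23) ∈ petersenGraph.incidenceSet v := by
    rw [← hv, Finset.mem_coe]; simp [Fset]
  have h2 : s(pv02, pv13) ∈ petersenGraph.incidenceSet v := by
    rw [← hv, Finset.mem_coe]; simp [Fset]
  have m1 : v = pv01 ∨ v = pv23 := Sym2.mem_iff.mp h1.2
  have m2 : v = pv02 ∨ v = pv13 := Sym2.mem_iff.mp h2.2
  rcases m1 with h | h <;> rcases m2 with h' | h' <;> subst h <;> exact absurd h' (by decide)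

lemma petersen_minDeg : minDeg petersenGraph = 3 := by
  have hdeg : ∀ v : PV, (petersenGraph.neighborSet v).ncard = 3 := by
    intro v
    rw [Set.ncard_eq_toFinset_card']
    revert v; decide
  have hset : {d | ∃ v : PV, (petersenGraph.neighborSet v).ncard = d} = {3} := by
    ext d
    simp only [Set.mem_setOf_eq, Set.mem_singleton_iff]
    constructor
    · rintro ⟨v, hvd⟩; rw [← hvd, hdeg]
    · rintro rfl; exact ⟨pv01, hdeg pv01⟩
  rw [minDeg, hset, csInf_singleton]

theorem stmt11 :
    (∃ F : Finset (Sym2 {s : Finset (Fin 5) // s.card = 2}),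
      IsMPSet petersenGraph F ∧ F.card = 3 ∧
      ¬ ∃ v, ↑F = petersenGraph.incidenceSet v) ∧
    ¬ SuperMatched petersenGraph := by
  have hcard : Fset.card = 3 := by decide
  refine ⟨⟨Fset, Fset_mp, hcard, Fset_nontrivial⟩, ?_⟩
  rintro ⟨h1, h2⟩
  exact Fset_nontrivial (h2 Fset Fset_mp (by rw [h1, petersen_minDeg, hcard]))
end

section
/- The folded k-cube graph FQ_k is super matched if and only if k ≥ 4. -/
open SimpleGraph

variable {V : Type*}

/-- The folded `k`-cube: the hypercube `Q_{k-1}` together with edges between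
antipodal pairs of vertices. -/
def foldedCube (k : ℕ) : SimpleGraph (Fin (k - 1) → Bool) where
  Adj x y := (∃! i, x i ≠ y i) ∨ (x ≠ y ∧ ∀ i, x i ≠ y i)
  symm := by
    constructor
    rintro x y (⟨i, hi, hu⟩ | ⟨hne, hall⟩)
    · exact Or.inl ⟨i, Ne.symm hi, fun j hj => hu j (Ne.symm hj)⟩
    · exact Or.inr ⟨hne.symm, fun i => (hall i).symm⟩
  loopless := by
    constructor
    rintro x (⟨i, hi, _⟩ | ⟨hne, _⟩)
    · exact hi rfl
    · exact hne rfl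

namespace FC

variable {k : ℕ}

/-- Flip one coordinate. -/
def flp (i : Fin (k-1)) (x : Fin (k-1) → Bool) : Fin (k-1) → Bool :=
  Function.update x i (!x i)

/-- Complement all coordinates. -/
def cmp (x : Fin (k-1) → Bool) : Fin (k-1) → Bool := fun j => !x j

@[simp] lemma flp_same (i : Fin (k-1)) (x) : flp i x i = !x i := by
  simp [flp]

lemma flp_ne (i j : Fin (k-1)) (x) (h : j ≠ i) : flp i x j = x j := by
  simp [flp, Function.update_of_ne h]

@[simp] lemma flp_flp (i : Fin (k-1)) (x) : flp i (flp i x) = x := by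
  funext j
  by_cases h : j = i
  · subst h; simp
  · rw [flp_ne _ _ _ h, flp_ne _ _ _ h]

lemma flp_comm (i j : Fin (k-1)) (x) (h : i ≠ j) :
    flp i (flp j x) = flp j (flp i x) := by
  funext l
  by_cases hi : l = i
  · rw [hi, flp_same, flp_ne j i x h, flp_ne j i (flp i x) h, flp_same]
  · by_cases hj : l = j
    · rw [hj, flp_ne i j (flp j x) h.symm, flp_same, flp_same, flp_ne i j x h.symm]
    · rw [flp_ne i l (flp j x) hi, flp_ne j l x hj, flp_ne j l (flp i x) hj,
        flp_ne i l x hi]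

lemma flp_injective (i : Fin (k-1)) : Function.Injective (flp i) := by
  intro x y h
  have := congrArg (flp i) h
  rwa [flp_flp, flp_flp] at this

lemma flp_ne_self (i : Fin (k-1)) (x) : flp i x ≠ x := by
  intro h
  have := congrFun h i
  simp at this

@[simp] lemma cmp_cmp (x : Fin (k-1) → Bool) : cmp (cmp x) = x := by
  funext j; simp [cmp]

lemma cmp_apply (x : Fin (k-1) → Bool) (j) : cmp x j = !x j := rfl

lemma two_le (hk : 3 ≤ k) : 2 ≤ k - 1 := by omega

/-- two distinct indices exist -/
lemma exists_other (hk : 3 ≤ k) (i : Fin (k-1)) : ∃ j : Fin (k-1), j ≠ i := by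
  have h2 : 2 ≤ k - 1 := by omega
  rcases i with ⟨iv, hi⟩
  by_cases h : iv = 0
  · exact ⟨⟨1, by omega⟩, by simp [Fin.ext_iff, h]⟩
  · exact ⟨⟨0, by omega⟩, by simp [Fin.ext_iff]; omega⟩

lemma flp_ne_cmp (hk : 3 ≤ k) (i : Fin (k-1)) (x) : flp i x ≠ cmp x := by
  intro h
  obtain ⟨j, hj⟩ := exists_other hk i
  have := congrFun h j
  rw [flp_ne i j x hj, cmp_apply] at this
  simp at this

lemma flp_cmp (i : Fin (k-1)) (x : Fin (k-1) → Bool) :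
    flp i (cmp x) = cmp (flp i x) := by
  funext j
  by_cases hj : j = i
  · rw [hj, flp_same, cmp_apply, cmp_apply, flp_same]
  · rw [flp_ne i j _ hj, cmp_apply, cmp_apply, flp_ne i j x hj]

lemma cmp_ne_self (hk : 3 ≤ k) (x : Fin (k-1) → Bool) : cmp x ≠ x := by
  intro h
  have : 0 < k - 1 := by omega
  have := congrFun h ⟨0, this⟩
  simp [cmp] at this


lemma adj_iff (x y : Fin (k-1) → Bool) :
    (foldedCube k).Adj x y ↔ ((∃! i, x i ≠ y i) ∨ (x ≠ y ∧ ∀ i, x i ≠ y i)) :=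
  Iff.rfl

lemma adj_iff' (x y : Fin (k-1) → Bool) :
    (foldedCube k).Adj x y ↔
      ((∃ i, x i ≠ y i ∧ ∀ j, x j ≠ y j → j = i) ∨ (x ≠ y ∧ ∀ i, x i ≠ y i)) :=
  Iff.rfl

lemma adj_flp (i : Fin (k-1)) (x) : (foldedCube k).Adj x (flp i x) := by
  rw [adj_iff]
  left
  refine ⟨i, by simp, fun j hj => ?_⟩
  by_contra hji
  exact hj (flp_ne i j x hji).symm

lemma adj_cmp (hk : 3 ≤ k) (x : Fin (k-1) → Bool) : (foldedCube k).Adj x (cmp x) := by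
  rw [adj_iff]
  right
  exact ⟨(cmp_ne_self hk x).symm, fun i => by simp [cmp_apply]⟩

lemma adj_classify {x y : Fin (k-1) → Bool} (h : (foldedCube k).Adj x y) :
    (∃ i, y = flp i x) ∨ y = cmp x := by
  rw [adj_iff] at h
  rcases h with ⟨i, hi, hu⟩ | ⟨_, hall⟩
  · left
    refine ⟨i, funext fun j => ?_⟩
    by_cases hj : j = i
    · subst hj
      rw [flp_same]
      revert hi
      cases x j <;> cases y j <;> simp
    · rw [flp_ne i j x hj]
      by_contra hne
      exact hj (hu j (Ne.symm hne))
  · right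
    funext j
    have := hall j
    rw [cmp_apply]
    revert this
    cases x j <;> cases y j <;> simp

/-- equality of flip-edges forces equal direction -/
lemma flp_edge_eq {i j : Fin (k-1)} {x y : Fin (k-1) → Bool}
    (h : s(x, flp i x) = s(y, flp j y)) : i = j := by
  rw [Sym2.eq_iff] at h
  rcases h with ⟨hxy, hf⟩ | ⟨h1, h2⟩
  · subst hxy
    by_contra hij
    have := congrFun hf i
    rw [flp_same, flp_ne j i x (by exact hij)] at this
    simp at this
  · -- x = flp j y, flp i x = y
    by_contra hij
    have hx : flp i (flp j y) = y := by rw [← h1]; exact h2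
    have := congrFun hx i
    rw [flp_same, flp_ne j i y (by exact hij)] at this
    simp at this

/-- a flip edge is never an antipodal edge -/
lemma flp_edge_ne_cmp (hk : 3 ≤ k) {i : Fin (k-1)} {x y : Fin (k-1) → Bool} :
    s(x, flp i x) ≠ s(y, cmp y) := by
  intro h
  rw [Sym2.eq_iff] at h
  rcases h with ⟨hxy, hf⟩ | ⟨h1, h2⟩
  · subst hxy
    exact flp_ne_cmp hk i x hf
  · -- x = cmp y, flp i x = y
    subst h1
    rw [flp_cmp] at h2
    have h3 : flp i y = cmp y := by
      have := congrArg cmp h2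
      rwa [cmp_cmp] at this
    exact flp_ne_cmp hk i y h3

/-- the class of an edge: `some i` for a flip edge in direction `i`, `none` otherwise. -/
noncomputable def cls (e : Sym2 (Fin (k-1) → Bool)) : Option (Fin (k-1)) :=
  if h : ∃ i, ∃ x, e = s(x, flp i x) then some h.choose else none

lemma cls_flp (i : Fin (k-1)) (x) : cls (s(x, flp i x)) = some i := by
  have h : ∃ i' , ∃ x', s(x, flp i x) = s(x', flp i' x') := ⟨i, x, rfl⟩
  rw [cls, dif_pos h]
  obtain ⟨x', hx'⟩ := h.choose_spec
  exact congrArg some (flp_edge_eq hx').symm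

lemma cls_cmp (hk : 3 ≤ k) (x : Fin (k-1) → Bool) : cls (s(x, cmp x)) = none := by
  rw [cls, dif_neg]
  rintro ⟨i, y, hy⟩
  exact flp_edge_ne_cmp hk hy.symm

lemma edge_form (hk : 3 ≤ k) {e : Sym2 (Fin (k-1) → Bool)}
    (he : e ∈ (foldedCube k).edgeSet) :
    (∃ i x, e = s(x, flp i x)) ∨ (∃ x, e = s(x, cmp x)) := by
  induction e with
  | _ x y =>
    rw [mem_edgeSet] at he
    rcases adj_classify he with ⟨i, hi⟩ | hc
    · exact Or.inl ⟨i, x, by rw [hi]⟩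
    · exact Or.inr ⟨x, by rw [hc]⟩

lemma form_of_cls_some (hk : 3 ≤ k) {e : Sym2 (Fin (k-1) → Bool)} {i : Fin (k-1)}
    (he : e ∈ (foldedCube k).edgeSet) (hc : cls e = some i) :
    ∃ x, e = s(x, flp i x) := by
  rcases edge_form hk he with ⟨j, x, hx⟩ | ⟨x, hx⟩
  · subst hx
    rw [cls_flp] at hc
    exact ⟨x, by rw [Option.some_inj.mp hc]⟩
  · subst hx
    rw [cls_cmp hk] at hc
    exact absurd hc (by simp)

lemma form_of_cls_none (hk : 3 ≤ k) {e : Sym2 (Fin (k-1) → Bool)}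
    (he : e ∈ (foldedCube k).edgeSet) (hc : cls e = none) :
    ∃ x, e = s(x, cmp x) := by
  rcases edge_form hk he with ⟨j, x, hx⟩ | ⟨x, hx⟩
  · subst hx
    rw [cls_flp] at hc
    exact absurd hc (by simp)
  · exact ⟨x, hx⟩

section PM

/-- A fixed-point-free adjacency involution yields a perfect matching. -/
lemma hasPM_of_invol {W : Type*} (G : SimpleGraph W) (σ : W → W)
    (h1 : ∀ x, σ (σ x) = x) (h2 : ∀ x, G.Adj x (σ x)) :
    HasPerfectMatching G := by
  refine ⟨⟨Set.univ, fun a b => σ a = b ∨ σ b = a, ?_, ?_, ?_⟩, ?_, ?_⟩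
  · rintro a b (h | h)
    · exact h ▸ h2 a
    · exact h ▸ (h2 b).symm
  · exact fun {a b} _ => Set.mem_univ a
  · constructor
    rintro a b (h | h)
    · exact Or.inr h
    · exact Or.inl h
  · rintro v -
    refine ⟨σ v, Or.inl rfl, ?_⟩
    rintro w (h | h)
    · exact h.symm
    · rw [← h, h1]
  · exact fun v => Set.mem_univ v

end PM

section Star

lemma neighborSet_eq (hk : 3 ≤ k) (v : Fin (k-1) → Bool) :
    (foldedCube k).neighborSet v =
      ↑(insert (cmp v) ((Finset.univ : Finset (Fin (k-1))).image (fun i => flp i v))) := by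
  ext y
  simp only [mem_neighborSet, Finset.coe_insert, Set.mem_insert_iff, Finset.coe_image,
    Finset.coe_univ, Set.image_univ, Set.mem_range]
  constructor
  · intro h
    rcases adj_classify h with ⟨i, hi⟩ | hc
    · exact Or.inr ⟨i, hi.symm⟩
    · exact Or.inl hc
  · rintro (rfl | ⟨i, rfl⟩)
    · exact adj_cmp hk v
    · exact adj_flp i v

lemma ncard_neighborSet (hk : 3 ≤ k) (v : Fin (k-1) → Bool) :
    ((foldedCube k).neighborSet v).ncard = k := by
  classical
  have hinj : Function.Injective (fun i => flp i v) := by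
    intro i j hij
    by_contra hne
    have := congrFun hij i
    simp only [flp_same, flp_ne j i v hne] at this
    exact Bool.not_ne_self _ this
  have hnm : cmp v ∉ (Finset.univ : Finset (Fin (k-1))).image (fun i => flp i v) := by
    simp only [Finset.mem_image, Finset.mem_univ, true_and]
    rintro ⟨i, hi⟩
    exact flp_ne_cmp hk i v hi
  rw [neighborSet_eq hk v, Set.ncard_coe_finset,
    Finset.card_insert_of_notMem hnm, Finset.card_image_of_injective _ hinj,
    Finset.card_univ, Fintype.card_fin]
  omega

lemma minDeg_eq (hk : 3 ≤ k) : minDeg (foldedCube k) = k := by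
  have hset : {d | ∃ v : Fin (k-1) → Bool, ((foldedCube k).neighborSet v).ncard = d} = {k} := by
    ext d
    simp only [Set.mem_setOf_eq, Set.mem_singleton_iff]
    constructor
    · rintro ⟨v, hv⟩
      rw [ncard_neighborSet hk v] at hv
      exact hv.symm
    · rintro rfl
      exact ⟨fun _ => false, ncard_neighborSet hk _⟩
  rw [minDeg, hset, csInf_singleton]

/-- the star of a vertex, as a finset -/
noncomputable def starF (v : Fin (k-1) → Bool) : Finset (Sym2 (Fin (k-1) → Bool)) :=
  ((foldedCube k).incidenceSet v).toFinite.toFinset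

lemma coe_starF (v : Fin (k-1) → Bool) : ↑(starF v) = (foldedCube k).incidenceSet v :=
  Set.Finite.coe_toFinset _

lemma card_starF (hk : 3 ≤ k) (v : Fin (k-1) → Bool) : (starF v).card = k := by
  classical
  have h1 : ((foldedCube k).incidenceSet v).ncard = k := by
    rw [← Nat.card_coe_set_eq,
      Nat.card_congr ((foldedCube k).incidenceSetEquivNeighborSet v),
      Nat.card_coe_set_eq, ncard_neighborSet hk v]
  have h2 : (starF v).card = ((foldedCube k).incidenceSet v).ncard :=
    (Set.ncard_eq_toFinset_card _ ((foldedCube k).incidenceSet v).toFinite).symm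
  rw [h2, h1]

lemma isMPSet_starF (v : Fin (k-1) → Bool) : IsMPSet (foldedCube k) (starF v) := by
  refine ⟨by rw [coe_starF]; exact (foldedCube k).incidenceSet_subset v, ?_⟩
  rintro ⟨M, hM, hsp⟩
  obtain ⟨w, hw, -⟩ := hM (hsp v)
  have := M.adj_sub hw
  rw [coe_starF, deleteEdges_adj] at this
  exact this.2 ⟨(foldedCube k).mem_edgeSet.mpr this.1, Sym2.mem_mk_left v w⟩

end Star

section Pigeonhole

/-- If `F` misses class `m`, the corresponding dimension/antipodal matching survives. -/
lemma hasPM_of_missed_class (hk : 3 ≤ k) (F : Finset (Sym2 (Fin (k-1) → Bool)))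
    (m : Option (Fin (k-1))) (hm : ∀ e ∈ F, cls e ≠ m) :
    HasPerfectMatching ((foldedCube k).deleteEdges ↑F) := by
  cases m with
  | none =>
    refine hasPM_of_invol _ cmp (fun x => cmp_cmp x) (fun x => ?_)
    rw [deleteEdges_adj]
    refine ⟨adj_cmp hk x, fun hmem => ?_⟩
    exact hm _ hmem (cls_cmp hk x)
  | some i =>
    refine hasPM_of_invol _ (flp i) (fun x => flp_flp i x) (fun x => ?_)
    rw [deleteEdges_adj]
    refine ⟨adj_flp i x, fun hmem => ?_⟩
    exact hm _ hmem (cls_flp i x)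

lemma hasPM_of_small (hk : 3 ≤ k) (F : Finset (Sym2 (Fin (k-1) → Bool)))
    (hF : F.card < k) :
    HasPerfectMatching ((foldedCube k).deleteEdges ↑F) := by
  classical
  have hcard : (F.image cls).card < Fintype.card (Option (Fin (k-1))) := by
    calc (F.image cls).card ≤ F.card := Finset.card_image_le
    _ < k := hF
    _ ≤ Fintype.card (Option (Fin (k-1))) := by
        rw [Fintype.card_option, Fintype.card_fin]; omega
  obtain ⟨m, hm⟩ : ∃ m, m ∉ F.image cls := by
    by_contra hc
    push_neg at hc
    have : (Finset.univ : Finset (Option (Fin (k-1)))).card ≤ (F.image cls).card :=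
      Finset.card_le_card (fun m _ => hc m)
    rw [Finset.card_univ] at this
    omega
  exact hasPM_of_missed_class hk F m (fun e he hce =>
    hm (Finset.mem_image.mpr ⟨e, he, hce⟩))

lemma mpNumber_eq (hk : 3 ≤ k) : mpNumber (foldedCube k) = k := by
  refine le_antisymm ?_ ?_
  · exact csInf_le (OrderBot.bddBelow _)
      ⟨starF (fun _ => false), isMPSet_starF _, card_starF hk _⟩
  · refine le_csInf ⟨k, starF (fun _ => false), isMPSet_starF _, card_starF hk _⟩ ?_
    rintro n ⟨F, ⟨-, hnpm⟩, rfl⟩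
    by_contra hlt
    exact hnpm (hasPM_of_small hk F (by omega))

end Pigeonhole

section TwoEdges

/-- If `F` contains a unique edge of class `some i` and a unique edge of class `some j`
(`i ≠ j`), and these two edges are disjoint, there is a perfect matching avoiding `F`. -/
lemma pm_dim_dim (F : Finset (Sym2 (Fin (k-1) → Bool)))
    (hinj : Set.InjOn (cls (k := k)) ↑F) {i j : Fin (k-1)} (hij : i ≠ j)
    {u w : Fin (k-1) → Bool}
    (he : s(u, flp i u) ∈ F) (he' : s(w, flp j w) ∈ F)
    (hdisj : ∀ v, v ∈ (s(u, flp i u) : Sym2 _) → v ∉ (s(w, flp j w) : Sym2 _)) :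
    HasPerfectMatching ((foldedCube k).deleteEdges ↑F) := by
  classical
  set A : (Fin (k-1) → Bool) → Prop :=
    fun z => z = u ∨ z = flp i u ∨ z = flp j u ∨ z = flp j (flp i u) with hA
  have hAj : ∀ z, A z → A (flp j z) := by
    rintro z (rfl | rfl | rfl | rfl)
    · exact Or.inr (Or.inr (Or.inl rfl))
    · exact Or.inr (Or.inr (Or.inr rfl))
    · exact Or.inl (flp_flp j u)
    · exact Or.inr (Or.inl (flp_flp j (flp i u)))
  have hAi : ∀ z, A (flp i z) → A z := by
    rintro z (hz | hz | hz | hz)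
    · exact Or.inr (Or.inl (by rw [← hz, flp_flp]))
    · exact Or.inl (flp_injective i hz)
    · refine Or.inr (Or.inr (Or.inr ?_))
      have := congrArg (flp i) hz
      rw [flp_flp, flp_comm i j u hij] at this
      exact this
    · refine Or.inr (Or.inr (Or.inl ?_))
      have := congrArg (flp i) hz
      rw [flp_flp, flp_comm i j (flp i u) hij, flp_flp] at this
      exact this
  refine hasPM_of_invol _ (fun z => if A z then flp j z else flp i z) (fun z => ?_) (fun z => ?_)
  · by_cases hz : A z
    · rw [if_pos hz, if_pos (hAj z hz), flp_flp]
    · rw [if_neg hz, if_neg (fun h => hz (hAi z h)), flp_flp]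
  · by_cases hz : A z
    · rw [if_pos hz, deleteEdges_adj]
      refine ⟨adj_flp j z, fun hmem => ?_⟩
      have hclseq : cls (s(z, flp j z)) = cls (s(w, flp j w)) := by
        rw [cls_flp, cls_flp]
      have heq := hinj hmem he' hclseq
      rcases hz with rfl | rfl | rfl | rfl
      · exact hdisj _ (Sym2.mem_mk_left _ _) (heq ▸ Sym2.mem_mk_left _ _)
      · exact hdisj _ (Sym2.mem_mk_right _ _) (heq ▸ Sym2.mem_mk_left _ _)
      · refine hdisj u (Sym2.mem_mk_left _ _) (heq ▸ ?_)
        rw [flp_flp]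
        exact Sym2.mem_mk_right _ _
      · refine hdisj (flp i u) (Sym2.mem_mk_right _ _) (heq ▸ ?_)
        rw [flp_flp]
        exact Sym2.mem_mk_right _ _
    · rw [if_neg hz, deleteEdges_adj]
      refine ⟨adj_flp i z, fun hmem => ?_⟩
      have hclseq : cls (s(z, flp i z)) = cls (s(u, flp i u)) := by
        rw [cls_flp, cls_flp]
      have heq := hinj hmem he hclseq
      rw [Sym2.eq_iff] at heq
      rcases heq with ⟨rfl, -⟩ | ⟨h1, -⟩
      · exact hz (Or.inl rfl)
      · exact hz (Or.inr (Or.inl h1))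

lemma pm_dim_anti (hk : 3 ≤ k) (F : Finset (Sym2 (Fin (k-1) → Bool)))
    (hinj : Set.InjOn (cls (k := k)) ↑F) {i : Fin (k-1)}
    {u w : Fin (k-1) → Bool}
    (he : s(u, flp i u) ∈ F) (he' : s(w, cmp w) ∈ F)
    (hdisj : ∀ v, v ∈ (s(u, flp i u) : Sym2 _) → v ∉ (s(w, cmp w) : Sym2 _)) :
    HasPerfectMatching ((foldedCube k).deleteEdges ↑F) := by
  classical
  set A : (Fin (k-1) → Bool) → Prop :=
    fun z => z = u ∨ z = flp i u ∨ z = cmp u ∨ z = cmp (flp i u) with hA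
  have hAc : ∀ z, A z → A (cmp z) := by
    rintro z (rfl | rfl | rfl | rfl)
    · exact Or.inr (Or.inr (Or.inl rfl))
    · exact Or.inr (Or.inr (Or.inr rfl))
    · exact Or.inl (cmp_cmp u)
    · exact Or.inr (Or.inl (cmp_cmp (flp i u)))
  have hAi : ∀ z, A (flp i z) → A z := by
    rintro z (hz | hz | hz | hz)
    · exact Or.inr (Or.inl (by rw [← hz, flp_flp]))
    · exact Or.inl (flp_injective i hz)
    · refine Or.inr (Or.inr (Or.inr ?_))
      have := congrArg (flp i) hz
      rw [flp_flp, flp_cmp] at this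
      exact this
    · refine Or.inr (Or.inr (Or.inl ?_))
      have := congrArg (flp i) hz
      rw [flp_flp, flp_cmp, flp_flp] at this
      exact this
  refine hasPM_of_invol _ (fun z => if A z then cmp z else flp i z) (fun z => ?_) (fun z => ?_)
  · by_cases hz : A z
    · rw [if_pos hz, if_pos (hAc z hz), cmp_cmp]
    · rw [if_neg hz, if_neg (fun h => hz (hAi z h)), flp_flp]
  · by_cases hz : A z
    · rw [if_pos hz, deleteEdges_adj]
      refine ⟨adj_cmp hk z, fun hmem => ?_⟩
      have hclseq : cls (s(z, cmp z)) = cls (s(w, cmp w)) := by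
        rw [cls_cmp hk, cls_cmp hk]
      have heq := hinj hmem he' hclseq
      rcases hz with rfl | rfl | rfl | rfl
      · exact hdisj _ (Sym2.mem_mk_left _ _) (heq ▸ Sym2.mem_mk_left _ _)
      · exact hdisj _ (Sym2.mem_mk_right _ _) (heq ▸ Sym2.mem_mk_left _ _)
      · refine hdisj u (Sym2.mem_mk_left _ _) (heq ▸ ?_)
        rw [cmp_cmp]
        exact Sym2.mem_mk_right _ _
      · refine hdisj (flp i u) (Sym2.mem_mk_right _ _) (heq ▸ ?_)
        rw [cmp_cmp]
        exact Sym2.mem_mk_right _ _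
    · rw [if_neg hz, deleteEdges_adj]
      refine ⟨adj_flp i z, fun hmem => ?_⟩
      have hclseq : cls (s(z, flp i z)) = cls (s(u, flp i u)) := by
        rw [cls_flp, cls_flp]
      have heq := hinj hmem he hclseq
      rw [Sym2.eq_iff] at heq
      rcases heq with ⟨rfl, -⟩ | ⟨h1, -⟩
      · exact hz (Or.inl rfl)
      · exact hz (Or.inr (Or.inl h1))

end TwoEdges

section Sunflower

/-- Four or more pairwise-intersecting non-loop edges share a common vertex. -/
lemma common_vertex {W : Type*} (F : Finset (Sym2 W)) (h4 : 4 ≤ F.card)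
    (hnd : ∀ e ∈ F, ¬ e.IsDiag)
    (hpair : ∀ e ∈ F, ∀ e' ∈ F, e ≠ e' → ∃ v, v ∈ e ∧ v ∈ e') :
    ∃ v, ∀ e ∈ F, v ∈ e := by
  classical
  obtain ⟨e1, he1⟩ := Finset.card_pos.mp (by omega : 0 < F.card)
  obtain ⟨a, ha⟩ : ∃ a, a ∈ e1 := by
    induction e1 with
    | _ x y => exact ⟨x, Sym2.mem_mk_left x y⟩
  obtain ⟨b, rfl⟩ := Sym2.mem_iff_exists.mp ha
  have hab : a ≠ b := fun h => hnd _ he1 (Sym2.mk_isDiag_iff.mpr h)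
  by_cases hA : ∀ e ∈ F, a ∈ e
  · exact ⟨a, hA⟩
  push_neg at hA
  obtain ⟨e2, he2, ha2⟩ := hA
  have hne21 : s(a, b) ≠ e2 := fun h => ha2 (h ▸ Sym2.mem_mk_left a b)
  obtain ⟨v, hv1, hv2⟩ := hpair _ he1 _ he2 hne21
  have hbv : v = b := by
    rcases Sym2.mem_iff.mp hv1 with rfl | rfl
    · exact absurd hv2 ha2
    · rfl
  subst hbv
  obtain ⟨c, rfl⟩ := Sym2.mem_iff_exists.mp hv2
  have hca : c ≠ a := fun h => ha2 (h ▸ Sym2.mem_mk_right v c)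
  have hcb : c ≠ v := fun h => hnd _ he2 (Sym2.mk_isDiag_iff.mpr h.symm)
  refine ⟨v, fun e he => ?_⟩
  by_contra hbe
  have hne_e1 : e ≠ s(a, v) := fun h => hbe (h ▸ Sym2.mem_mk_right a v)
  have hne_e2 : e ≠ s(v, c) := fun h => hbe (h ▸ Sym2.mem_mk_left v c)
  have hae : a ∈ e := by
    obtain ⟨x, hx1, hx2⟩ := hpair _ he _ he1 hne_e1
    rcases Sym2.mem_iff.mp hx2 with rfl | rfl
    · exact hx1
    · exact absurd hx1 hbe
  have hce : c ∈ e := by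
    obtain ⟨x, hx1, hx2⟩ := hpair _ he _ he2 hne_e2
    rcases Sym2.mem_iff.mp hx2 with rfl | rfl
    · exact absurd hx1 hbe
    · exact hx1
  have he_eq : e = s(a, c) := by
    obtain ⟨d, rfl⟩ := Sym2.mem_iff_exists.mp hae
    rcases Sym2.mem_iff.mp hce with rfl | rfl
    · exact absurd rfl hca
    · rfl
  subst he_eq
  -- find a fourth edge
  have hcard3 : ({s(a, v), s(v, c), s(a, c)} : Finset (Sym2 W)).card ≤ 3 := by
    apply le_trans (Finset.card_insert_le _ _)
    have := Finset.card_insert_le (s(v, c)) ({s(a, c)} : Finset (Sym2 W))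
    simp only [Finset.card_singleton] at this ⊢
    omega
  have hsd : 0 < (F \ {s(a, v), s(v, c), s(a, c)}).card := by
    have := Finset.card_le_card_sdiff_add_card (s := F) (t := {s(a, v), s(v, c), s(a, c)})
    omega
  obtain ⟨e4, he4⟩ := Finset.card_pos.mp hsd
  rw [Finset.mem_sdiff] at he4
  obtain ⟨he4F, he4n⟩ := he4
  simp only [Finset.mem_insert, Finset.mem_singleton] at he4n
  push_neg at he4n
  obtain ⟨hn1, hn2, hn3⟩ := he4n
  by_cases hb4 : v ∈ e4
  · obtain ⟨z, rfl⟩ := Sym2.mem_iff_exists.mp hb4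
    obtain ⟨x, hx1, hx2⟩ := hpair _ he4F _ he hn3
    rcases Sym2.mem_iff.mp hx2 with rfl | rfl
    · rcases Sym2.mem_iff.mp hx1 with h | rfl
      · exact hab h
      · exact hn1 (Sym2.eq_swap)
    · rcases Sym2.mem_iff.mp hx1 with h | rfl
      · exact hcb h
      · exact hn2 rfl
  · have ha4 : a ∈ e4 := by
      obtain ⟨x, hx1, hx2⟩ := hpair _ he4F _ he1 hn1
      rcases Sym2.mem_iff.mp hx2 with rfl | rfl
      · exact hx1
      · exact absurd hx1 hb4
    have hc4 : c ∈ e4 := by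
      obtain ⟨x, hx1, hx2⟩ := hpair _ he4F _ he2 hn2
      rcases Sym2.mem_iff.mp hx2 with rfl | rfl
      · exact absurd hx1 hb4
      · exact hx1
    obtain ⟨d, rfl⟩ := Sym2.mem_iff_exists.mp ha4
    rcases Sym2.mem_iff.mp hc4 with rfl | rfl
    · exact hca rfl
    · exact hn3 rfl

end Sunflower

section Classify

lemma ncard_incidenceSet (hk : 3 ≤ k) (v : Fin (k-1) → Bool) :
    ((foldedCube k).incidenceSet v).ncard = k := by
  classical
  rw [← Nat.card_coe_set_eq,
    Nat.card_congr ((foldedCube k).incidenceSetEquivNeighborSet v),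
    Nat.card_coe_set_eq, ncard_neighborSet hk v]

lemma classification (hk4 : 4 ≤ k) (F : Finset (Sym2 (Fin (k-1) → Bool)))
    (hMP : IsMPSet (foldedCube k) F) (hcard : F.card = k) :
    ∃ v, ↑F = (foldedCube k).incidenceSet v := by
  classical
  have hk : 3 ≤ k := by omega
  obtain ⟨hsub, hnpm⟩ := hMP
  -- every class is hit
  have hcover : ∀ m, ∃ e ∈ F, cls e = m := by
    by_contra hc
    push_neg at hc
    obtain ⟨m, hm⟩ := hc
    exact hnpm (hasPM_of_missed_class hk F m hm)
  have himg : F.image cls = (Finset.univ : Finset (Option (Fin (k-1)))) := by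
    refine Finset.eq_univ_of_forall (fun m => ?_)
    obtain ⟨e, he, hce⟩ := hcover m
    exact Finset.mem_image.mpr ⟨e, he, hce⟩
  have hinj : Set.InjOn (cls (k := k)) ↑F := by
    apply Finset.injOn_of_card_image_eq
    rw [himg, Finset.card_univ, Fintype.card_option, Fintype.card_fin, hcard]
    omega
  -- pairwise intersection
  have hpair : ∀ e ∈ F, ∀ e' ∈ F, e ≠ e' → ∃ v, v ∈ e ∧ v ∈ e' := by
    intro e he e' he' hne
    by_contra hd
    push_neg at hd
    rcases hce : cls e with - | i <;> rcases hce' : cls e' with - | j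
    · exact hne (hinj he he' (hce.trans hce'.symm))
    · obtain ⟨x, hx⟩ := form_of_cls_none hk (hsub he) hce
      obtain ⟨y, hy⟩ := form_of_cls_some hk (hsub he') hce'
      subst hx; subst hy
      refine hnpm (pm_dim_anti hk F hinj he' he (fun v hv hv' => hd v hv' hv))
    · obtain ⟨x, hx⟩ := form_of_cls_some hk (hsub he) hce
      obtain ⟨y, hy⟩ := form_of_cls_none hk (hsub he') hce'
      subst hx; subst hy
      exact hnpm (pm_dim_anti hk F hinj he he' hd)
    · obtain ⟨x, hx⟩ := form_of_cls_some hk (hsub he) hce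
      obtain ⟨y, hy⟩ := form_of_cls_some hk (hsub he') hce'
      subst hx; subst hy
      have hij : i ≠ j := by
        intro h
        exact hne (hinj he he' (by rw [hce, hce', h]))
      exact hnpm (pm_dim_dim F hinj hij he he' hd)
  obtain ⟨v, hv⟩ := common_vertex F (by omega) (fun e he =>
    SimpleGraph.not_isDiag_of_mem_edgeSet _ (hsub he)) hpair
  have hss : ↑F ⊆ (foldedCube k).incidenceSet v :=
    fun e he => ⟨hsub he, hv e (Finset.mem_coe.mp he)⟩
  refine ⟨v, Set.eq_of_subset_of_ncard_le hss ?_ (Set.toFinite _)⟩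
  rw [ncard_incidenceSet hk v, Set.ncard_coe_finset, hcard]

end Classify

section KThree

def a3 : Fin (3-1) → Bool := ![false, false]
def b3 : Fin (3-1) → Bool := ![false, true]
def c3 : Fin (3-1) → Bool := ![true, false]
def d3 : Fin (3-1) → Bool := ![true, true]

def F3 : Finset (Sym2 (Fin (3-1) → Bool)) := {s(a3, b3), s(a3, c3), s(b3, c3)}

lemma k3_not_superMatched : ¬ SuperMatched (foldedCube 3) := by
  rintro ⟨-, h2⟩
  have hsub : ↑F3 ⊆ (foldedCube 3).edgeSet := by
    intro e he
    simp only [F3, Finset.coe_insert, Set.mem_insert_iff, Finset.coe_singleton,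
      Set.mem_singleton_iff] at he
    rcases he with rfl | rfl | rfl <;>
      · rw [mem_edgeSet, adj_iff']
        decide
  have hnpm : ¬ HasPerfectMatching ((foldedCube 3).deleteEdges ↑F3) := by
    rintro ⟨M, hM, hsp⟩
    have hA : ∀ w : Fin (3-1) → Bool,
        ((∃ i, a3 i ≠ w i ∧ ∀ j, a3 j ≠ w j → j = i) ∨ (a3 ≠ w ∧ ∀ i, a3 i ≠ w i)) →
          w = b3 ∨ w = c3 ∨ w = d3 := by decide
    have hB : ∀ w : Fin (3-1) → Bool,
        ((∃ i, b3 i ≠ w i ∧ ∀ j, b3 j ≠ w j → j = i) ∨ (b3 ≠ w ∧ ∀ i, b3 i ≠ w i)) →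
          w = a3 ∨ w = c3 ∨ w = d3 := by decide
    have hmem1 : s(a3, b3) ∈ F3 := by decide
    have hmem2 : s(a3, c3) ∈ F3 := by decide
    have hmem3 : s(b3, a3) ∈ F3 := by decide
    have hmem4 : s(b3, c3) ∈ F3 := by decide
    obtain ⟨w, hw, -⟩ := hM (hsp a3)
    have hadj := M.adj_sub hw
    rw [deleteEdges_adj] at hadj
    obtain ⟨hGa, hnF⟩ := hadj
    have hwd : w = d3 := by
      rcases hA w ((adj_iff' a3 w).mp hGa) with rfl | rfl | rfl
      · exact absurd (Finset.mem_coe.mpr hmem1) hnF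
      · exact absurd (Finset.mem_coe.mpr hmem2) hnF
      · rfl
    subst hwd
    obtain ⟨w', hw', -⟩ := hM (hsp b3)
    have hadj' := M.adj_sub hw'
    rw [deleteEdges_adj] at hadj'
    obtain ⟨hGb, hnF'⟩ := hadj'
    have hwd' : w' = d3 := by
      rcases hB w' ((adj_iff' b3 w').mp hGb) with rfl | rfl | rfl
      · exact absurd (Finset.mem_coe.mpr hmem3) hnF'
      · exact absurd (Finset.mem_coe.mpr hmem4) hnF'
      · rfl
    subst hwd'
    obtain ⟨z, -, huniq⟩ := hM (hsp d3)
    have hz1 : a3 = z := huniq a3 hw.symm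
    have hz2 : b3 = z := huniq b3 hw'.symm
    have : a3 = b3 := hz1.trans hz2.symm
    exact absurd this (by decide)
  have hcard : F3.card = 3 := by decide
  obtain ⟨v, hv⟩ := h2 F3 ⟨hsub, hnpm⟩
    (by rw [hcard, mpNumber_eq (le_refl 3)])
  have hm1 : v ∈ s(a3, b3) :=
    (show s(a3, b3) ∈ (foldedCube 3).incidenceSet v from
      hv ▸ Finset.mem_coe.mpr (by decide)).2
  have hm2 : v ∈ s(a3, c3) :=
    (show s(a3, c3) ∈ (foldedCube 3).incidenceSet v from
      hv ▸ Finset.mem_coe.mpr (by decide)).2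
  have hm3 : v ∈ s(b3, c3) :=
    (show s(b3, c3) ∈ (foldedCube 3).incidenceSet v from
      hv ▸ Finset.mem_coe.mpr (by decide)).2
  rw [Sym2.mem_iff] at hm1 hm2 hm3
  exact (by decide : ∀ v : Fin (3-1) → Bool,
    (v = a3 ∨ v = b3) → (v = a3 ∨ v = c3) → (v = b3 ∨ v = c3) → False) v hm1 hm2 hm3

end KThree

end FC

theorem stmt15 (k : ℕ) (hk : 3 ≤ k) :
    SuperMatched (foldedCube k) ↔ 4 ≤ k := by
  constructor
  · intro hSM
    by_contra h4
    have hk3 : k = 3 := by omega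
    subst hk3
    exact FC.k3_not_superMatched hSM
  · intro h4
    refine ⟨?_, ?_⟩
    · rw [FC.mpNumber_eq hk, FC.minDeg_eq hk]
    · intro F hF hc
      exact FC.classification h4 F hF (by rw [hc, FC.mpNumber_eq hk])
end
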